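/- arXiv:2002.06762 — 7 statements merged into one kernel-verified Lean document; each statement's English description precedes it below -/
import Mathlib

section
/- For every finite tree T (a finite connected acyclic simple graph) with at least one edge and every vertex r of T, there exists an Euler tour of T rooted at r, i.e., a closed walk in T from r to r whose list of darts contains every dart of T exactly once (hence the walk has length 2(n-1) if T has n vertices). -/
open SimpleGraph

/-- An Euler tour of a graph `G` rooted at `r` is a closed walk from `r` to `r`
whose list of darts contains every dart of `G` exactly once. -/
def SimpleGraph.Walk.IsEulerTour {V : Type*} {G : SimpleGraph V} {r : V}
    (w : G.Walk r r) : Prop :=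
  letI : DecidableEq G.Dart := Classical.decEq _
  ∀ d : G.Dart, w.darts.count d = 1

section helpers

variable {V : Type*}

lemma tree_exists_leaf [Fintype V] {T : SimpleGraph V} (hT : T.IsTree)
    (hE : T.edgeSet.Nonempty) (r : V) :
    ∃ (ℓ x : V), ∃ _h : T.Adj x ℓ, ℓ ≠ r ∧ ∀ y, T.Adj y ℓ → y = x := by
  classical
  have h1 : ∀ v, ∃ p : T.Walk r v, p.IsPath := fun v => (hT.existsUnique_path r v).exists
  choose P hP using h1
  have hPu : ∀ v (q : T.Walk r v), q.IsPath → q = P v := fun v q hq =>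
    (hT.existsUnique_path r v).unique hq (hP v)
  obtain ⟨ℓ, -, hmax⟩ := Finset.exists_max_image Finset.univ (fun v => (P v).length)
    ⟨r, Finset.mem_univ r⟩
  obtain ⟨e, he⟩ := hE
  induction e with
  | _ a b =>
  rw [SimpleGraph.mem_edgeSet] at he
  have hvr : ∃ v : V, v ≠ r := by
    by_cases h : a = r
    · exact ⟨b, by rintro rfl; exact he.ne (h.symm ▸ rfl)⟩
    · exact ⟨a, h⟩
  obtain ⟨v, hvr⟩ := hvr
  have hlen : 1 ≤ (P ℓ).length := by
    have h0 : (P v).length ≠ 0 := by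
      intro h0
      exact hvr ((SimpleGraph.Walk.eq_of_length_eq_zero h0).symm)
    have := hmax v (Finset.mem_univ v)
    omega
  have hℓr : ℓ ≠ r := by
    intro h
    subst h
    have : P ℓ = SimpleGraph.Walk.nil :=
      (hPu ℓ SimpleGraph.Walk.nil SimpleGraph.Walk.IsPath.nil).symm
    rw [this] at hlen
    simp at hlen
  have hnil : ¬ (P ℓ).Nil := SimpleGraph.Walk.not_nil_of_ne (Ne.symm hℓr)
  obtain ⟨u, hadj, q, hq⟩ := SimpleGraph.Walk.not_nil_iff.mp hnil
  obtain ⟨x, q', hx, hc⟩ := SimpleGraph.Walk.exists_cons_eq_concat hadj q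
  have hPc : P ℓ = q'.concat hx := by rw [hq, hc]
  refine ⟨ℓ, x, hx, hℓr, ?_⟩
  intro y hy
  by_contra hyx
  by_cases hys : y ∈ (P ℓ).support
  · have hyℓ : y ≠ ℓ := hy.ne
    have hd : ((P ℓ).dropUntil y hys).IsPath := (hP ℓ).dropUntil hys
    have hsingle : (SimpleGraph.Walk.cons hy SimpleGraph.Walk.nil : T.Walk y ℓ).IsPath := by
      simp [SimpleGraph.Walk.cons_isPath_iff, hyℓ]
    have heq : (P ℓ).dropUntil y hys = SimpleGraph.Walk.cons hy SimpleGraph.Walk.nil := by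
      have := hT.existsUnique_path y ℓ
      exact (this.unique hd hsingle)
    have hPc2 : P ℓ = ((P ℓ).takeUntil y hys).concat hy := by
      conv_lhs => rw [← (P ℓ).take_spec hys]
      rw [heq, SimpleGraph.Walk.concat_eq_append]
    have hcc := hPc.symm.trans hPc2
    obtain ⟨hv, -⟩ := SimpleGraph.Walk.concat_inj hcc
    exact hyx hv.symm
  · have hext : ((P ℓ).concat hy.symm).IsPath := by
      rw [← SimpleGraph.Walk.isPath_reverse_iff, SimpleGraph.Walk.reverse_concat]
      rw [SimpleGraph.Walk.cons_isPath_iff]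
      refine ⟨(SimpleGraph.Walk.isPath_reverse_iff _).mpr (hP ℓ), ?_⟩
      simpa using hys
    have heq := hPu y _ hext
    have hl : ((P ℓ).concat hy.symm).length = (P ℓ).length + 1 :=
      SimpleGraph.Walk.length_concat _ _
    have h2 := hmax y (Finset.mem_univ y)
    rw [← heq, hl] at h2
    omega

lemma path_avoids_leaf {T : SimpleGraph V} {ℓ x : V}
    (huniq : ∀ y, T.Adj y ℓ → y = x) {u v : V} {p : T.Walk u v} (hp : p.IsPath)
    (hu : u ≠ ℓ) (hv : v ≠ ℓ) : ℓ ∉ p.support := by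
  classical
  intro hℓ
  set t := p.takeUntil ℓ hℓ with ht
  set d := p.dropUntil ℓ hℓ with hd
  have hspec : t.append d = p := p.take_spec hℓ
  have htn : ¬ t.Nil := SimpleGraph.Walk.not_nil_of_ne hu
  have hdn : ¬ d.Nil := SimpleGraph.Walk.not_nil_of_ne (Ne.symm hv)
  obtain ⟨b, hb, d', hd'⟩ := SimpleGraph.Walk.not_nil_iff.mp hdn
  have hbx : b = x := huniq b hb.symm
  obtain ⟨u1, h1, q1, hq1⟩ := SimpleGraph.Walk.not_nil_iff.mp htn
  obtain ⟨a, t', ha, hc⟩ := SimpleGraph.Walk.exists_cons_eq_concat h1 q1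
  have hax : a = x := huniq a ha
  have htc : t = t'.concat ha := by rw [hq1, hc]
  have hx1 : x ∈ t.support := by
    rw [htc, SimpleGraph.Walk.support_concat]
    simp only [List.concat_eq_append, List.mem_append]
    exact Or.inl (hax ▸ t'.end_mem_support)
  have hx2 : x ∈ d.support.tail := by
    rw [hd', SimpleGraph.Walk.support_cons]
    exact hbx ▸ d'.start_mem_support
  have hnodup : (t.support ++ d.support.tail).Nodup := by
    rw [← SimpleGraph.Walk.support_append, hspec]
    exact hp.support_nodup
  rw [List.nodup_append] at hnodup
  exact hnodup.2.2 x hx1 x hx2 rfl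

lemma induce_reachable {T : SimpleGraph V} {s : Set V} {u v : V} (p : T.Walk u v)
    (hp : ∀ x ∈ p.support, x ∈ s) :
    (T.induce s).Reachable ⟨u, hp u p.start_mem_support⟩ ⟨v, hp v p.end_mem_support⟩ := by
  induction p with
  | nil => exact SimpleGraph.Reachable.refl _
  | @cons a b c h q ih =>
    have hb : b ∈ s := hp b (by simp)
    have ha : a ∈ s := hp a (by simp)
    have h' : (T.induce s).Adj ⟨a, ha⟩ ⟨b, hb⟩ := h
    exact h'.reachable.trans (ih (fun x hx => hp x (by simp [hx])))

lemma mapDart_injective {W : Type*} {G : SimpleGraph V} {G' : SimpleGraph W} (f : G ↪g G') :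
    Function.Injective f.toHom.mapDart := by
  rintro ⟨⟨a, b⟩, hab⟩ ⟨⟨c, d⟩, hcd⟩ h
  simp only [SimpleGraph.Hom.mapDart_apply, SimpleGraph.Dart.mk.injEq, Prod.map, Prod.mk.injEq] at h
  simp only [SimpleGraph.Dart.mk.injEq, Prod.mk.injEq]
  exact ⟨f.injective h.1, f.injective h.2⟩

lemma induce_isTree {T : SimpleGraph V} (hT : T.IsTree) {ℓ x : V}
    (huniq : ∀ y, T.Adj y ℓ → y = x) {r : V} (hr : r ≠ ℓ) :
    (T.induce {v | v ≠ ℓ}).IsTree := by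
  constructor
  · rw [SimpleGraph.connected_iff]
    refine ⟨?_, ⟨⟨r, hr⟩⟩⟩
    rintro ⟨a, ha⟩ ⟨b, hb⟩
    obtain ⟨p, hp⟩ := (hT.existsUnique_path a b).exists
    have havoid : ℓ ∉ p.support := path_avoids_leaf huniq hp ha hb
    have hmem : ∀ y ∈ p.support, y ∈ {v | v ≠ ℓ} := by
      intro y hy hyl
      exact havoid (hyl ▸ hy)
    exact induce_reachable p hmem
  · intro a p hp
    have hinj : Function.Injective
        ⇑(SimpleGraph.Embedding.induce (G := T) {v | v ≠ ℓ}).toHom :=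
      Subtype.val_injective
    have := (SimpleGraph.Walk.map_isCycle_iff_of_injective hinj).mpr hp
    exact (hT.IsAcyclic _ this).elim

lemma exists_edge_of_connected {W : Type*} [Fintype W] {G : SimpleGraph W}
    (hc : G.Connected) (h2 : 1 < Fintype.card W) : G.edgeSet.Nonempty := by
  have : Nontrivial W := Fintype.one_lt_card_iff_nontrivial.mp h2
  obtain ⟨a, b, hab⟩ := exists_pair_ne W
  obtain ⟨p⟩ := hc a b
  have hn : ¬ p.Nil := SimpleGraph.Walk.not_nil_of_ne hab
  obtain ⟨u, h, -, -⟩ := SimpleGraph.Walk.not_nil_iff.mp hn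
  exact ⟨s(a, u), h⟩

end helpers

universe u

lemma euler_aux : ∀ (n : ℕ) {V : Type u} [Fintype V] (T : SimpleGraph V),
    Fintype.card V ≤ n → T.IsTree → T.edgeSet.Nonempty → ∀ r : V,
    ∃ w : T.Walk r r, w.IsEulerTour ∧ w.length = 2 * (Fintype.card V - 1) := by
  intro n
  induction n with
  | zero =>
    intro V _ T hcard hT hE r
    have : 0 < Fintype.card V := Fintype.card_pos_iff.mpr ⟨r⟩
    omega
  | succ n ih =>
    intro V _ T hcard hT hE r
    classical
    letI : DecidableEq T.Dart := Classical.decEq _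
    obtain ⟨ℓ, x, hx, hℓr, huniq⟩ := tree_exists_leaf hT hE r
    set s : Set V := {v | v ≠ ℓ} with hs
    letI : DecidableEq (T.induce s).Dart := Classical.decEq _
    have hr : r ∈ s := Ne.symm hℓr
    have hxs : x ∈ s := hx.ne
    have hT' : (T.induce s).IsTree := induce_isTree hT huniq (Ne.symm hℓr)
    have hcards : Fintype.card s = Fintype.card V - 1 := by
      have : Fintype.card s = Fintype.card {v // ¬ v = ℓ} := by
        apply Fintype.card_congr
        exact Equiv.subtypeEquivRight (by intro v; simp [hs])
      rw [this, Fintype.card_subtype_compl, Fintype.card_subtype_eq]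
    have hcardV : 0 < Fintype.card V := Fintype.card_pos_iff.mpr ⟨r⟩
    -- the two new darts
    by_cases h1 : Fintype.card s = 1
    · -- base: exactly two vertices r, ℓ
      haveI hsub : Subsingleton s := Fintype.card_le_one_iff_subsingleton.mp h1.le
      have hxr : x = r := by
        have h' : (⟨x, hxs⟩ : s) = ⟨r, hr⟩ := Subsingleton.elim _ _
        exact congrArg Subtype.val h'
      subst hxr
      refine ⟨SimpleGraph.Walk.cons hx (SimpleGraph.Walk.cons hx.symm SimpleGraph.Walk.nil),
        ?_, ?_⟩
      · intro d
        have hvert : ∀ v : V, v = x ∨ v = ℓ := by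
          intro v
          by_cases hv : v = ℓ
          · exact Or.inr hv
          · exact Or.inl (by
              have h' : (⟨v, hv⟩ : s) = ⟨x, hxs⟩ := Subsingleton.elim _ _
              exact congrArg Subtype.val h')
        have hne := d.adj.ne
        have hd : d = SimpleGraph.Dart.mk (x, ℓ) hx ∨ d = SimpleGraph.Dart.mk (ℓ, x) hx.symm := by
          rcases hvert d.fst with h | h <;> rcases hvert d.snd with h' | h'
          · exact absurd (h.trans h'.symm) hne
          · left; exact SimpleGraph.Dart.ext _ _ (Prod.ext h h')
          · right; exact SimpleGraph.Dart.ext _ _ (Prod.ext h h')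
          · exact absurd (h.trans h'.symm) hne
        have hne12 : SimpleGraph.Dart.mk (x, ℓ) hx ≠ SimpleGraph.Dart.mk (ℓ, x) hx.symm := by
          intro h
          have := congrArg (fun e : T.Dart => e.fst) h
          exact hx.ne this
        rcases hd with rfl | rfl <;>
          simp [SimpleGraph.Walk.darts_cons, List.count_cons, hne12, hne12.symm]
      · have h2 : Fintype.card V = 2 := by omega
        simp [SimpleGraph.Walk.length_cons, h2]
    · -- inductive step
      have h2 : 2 ≤ Fintype.card s := by
        have : 0 < Fintype.card s := Fintype.card_pos_iff.mpr ⟨⟨r, hr⟩⟩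
        omega
      have hE' : (T.induce s).edgeSet.Nonempty :=
        exists_edge_of_connected hT'.isConnected (by omega)
      have hcard' : Fintype.card s ≤ n := by omega
      obtain ⟨w', hw', hlen'⟩ := ih (T.induce s) hcard' hT' hE' ⟨r, hr⟩
      set f : T.induce s ↪g T := SimpleGraph.Embedding.induce s with hf
      set w0 : T.Walk r r := w'.map f.toHom with hw0
      -- x is in the support of w0
      have hnt : Nontrivial s := Fintype.one_lt_card_iff_nontrivial.mp (by omega)
      obtain ⟨c, hc_ne⟩ := exists_ne (⟨x, hxs⟩ : s)
      have hxsupp' : (⟨x, hxs⟩ : s) ∈ w'.support := by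
        obtain ⟨p⟩ := hT'.isConnected ⟨x, hxs⟩ c
        have hn : ¬ p.Nil := SimpleGraph.Walk.not_nil_of_ne (Ne.symm hc_ne)
        obtain ⟨u, hadj, -, -⟩ := SimpleGraph.Walk.not_nil_iff.mp hn
        have hd0 : SimpleGraph.Dart.mk (⟨x, hxs⟩, u) hadj ∈ w'.darts := by
          have hcount := hw' (SimpleGraph.Dart.mk (⟨x, hxs⟩, u) hadj)
          by_contra hm
          rw [List.count_eq_zero_of_not_mem hm] at hcount
          exact Nat.zero_ne_one hcount
        exact SimpleGraph.Walk.dart_fst_mem_support_of_mem_darts _ hd0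
      have hxw : x ∈ w0.support := by
        rw [show w0.support = w'.support.map f.toHom from SimpleGraph.Walk.support_map f.toHom w']
        exact List.mem_map.mpr ⟨⟨x, hxs⟩, hxsupp', rfl⟩
      set t := w0.takeUntil x hxw with htdef
      set dr := w0.dropUntil x hxw with hdrdef
      set d1 : T.Dart := SimpleGraph.Dart.mk (x, ℓ) hx with hd1
      set d2 : T.Dart := SimpleGraph.Dart.mk (ℓ, x) hx.symm with hd2
      refine ⟨t.append (SimpleGraph.Walk.cons hx (SimpleGraph.Walk.cons hx.symm dr)), ?_, ?_⟩
      · intro d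
        have hsplit : t.darts ++ dr.darts = w0.darts := by
          rw [← SimpleGraph.Walk.darts_append, w0.take_spec hxw]
        have hdartsmem : ∀ e : T.Dart, e ∈ w0.darts → e.fst ≠ ℓ ∧ e.snd ≠ ℓ := by
          intro e he
          rw [show w0.darts = w'.darts.map f.toHom.mapDart from SimpleGraph.Walk.darts_map f.toHom w'] at he
          obtain ⟨e', -, rfl⟩ := List.mem_map.mp he
          exact ⟨e'.fst.2, e'.snd.2⟩
        have hcount_split : w0.darts.count d = t.darts.count d + dr.darts.count d := by
          rw [← hsplit, List.count_append]
        have hd12 : d1 ≠ d2 := by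
          intro h
          have := congrArg (fun e : T.Dart => e.fst) h
          exact hx.ne this
        have key : ∀ (hA : d = d1 ∨ d ≠ d1) (_ : True), True := fun _ _ => trivial
        rw [SimpleGraph.Walk.darts_append, SimpleGraph.Walk.darts_cons,
          SimpleGraph.Walk.darts_cons, List.count_append, List.count_cons, List.count_cons]
        simp only [beq_iff_eq]
        by_cases hsnd : d.snd = ℓ
        · have hfst : d.fst = x := huniq d.fst (hsnd ▸ d.adj)
          have hdd1 : d = d1 := SimpleGraph.Dart.ext _ _ (Prod.ext hfst hsnd)
          have hzero : w0.darts.count d = 0 := by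
            apply List.count_eq_zero_of_not_mem
            intro hm
            exact (hdartsmem d hm).2 hsnd
          have hne2 : d ≠ d2 := fun h => hd12 (hdd1 ▸ h)
          rw [if_pos hdd1.symm, if_neg (Ne.symm hne2)]
          rw [hcount_split] at hzero
          omega
        · by_cases hfst : d.fst = ℓ
          · have hsnd' : d.snd = x := huniq d.snd (by rw [← hfst]; exact d.adj.symm)
            have hdd2 : d = d2 := SimpleGraph.Dart.ext _ _ (Prod.ext hfst hsnd')
            have hzero : w0.darts.count d = 0 := by
              apply List.count_eq_zero_of_not_mem
              intro hm
              exact (hdartsmem d hm).1 hfst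
            have hne1 : d ≠ d1 := fun h => hd12.symm (hdd2 ▸ h)
            rw [if_neg (Ne.symm hne1), if_pos hdd2.symm]
            rw [hcount_split] at hzero
            omega
          · have hadj' : (T.induce s).Adj ⟨d.fst, hfst⟩ ⟨d.snd, hsnd⟩ := d.adj
            set d' : (T.induce s).Dart := SimpleGraph.Dart.mk (⟨d.fst, hfst⟩, ⟨d.snd, hsnd⟩) hadj'
              with hd'
            have hmapd : f.toHom.mapDart d' = d := by
              apply SimpleGraph.Dart.ext
              rfl
            have hcnt : w0.darts.count d = 1 := by
              rw [show w0.darts = w'.darts.map f.toHom.mapDart from SimpleGraph.Walk.darts_map f.toHom w', ← hmapd,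
                List.count_map_of_injective _ _ (mapDart_injective f)]
              exact hw' d'
            have hne1 : d ≠ d1 := by
              intro h
              exact hsnd (congrArg (fun e : T.Dart => e.snd) h)
            have hne2 : d ≠ d2 := by
              intro h
              exact hfst (congrArg (fun e : T.Dart => e.fst) h)
            rw [if_neg (Ne.symm hne1), if_neg (Ne.symm hne2)]
            rw [hcount_split] at hcnt
            omega
      · rw [SimpleGraph.Walk.length_append, SimpleGraph.Walk.length_cons,
          SimpleGraph.Walk.length_cons]
        have hsum : t.length + dr.length = w0.length := by
          rw [← SimpleGraph.Walk.length_append, w0.take_spec hxw]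
        have hw0len : w0.length = w'.length := SimpleGraph.Walk.length_map _ _
        omega

/-- Every finite tree with at least one edge has an Euler tour rooted at any
given vertex `r`: a closed walk from `r` to `r` traversing every dart exactly once; such a walk
has length `2 * (n - 1)` where `n` is the number of vertices. -/
theorem exists_euler_tour {V : Type*} [Fintype V] (T : SimpleGraph V)
    (hT : T.IsTree) (hE : T.edgeSet.Nonempty) (r : V) :
    ∃ w : T.Walk r r, w.IsEulerTour ∧ w.length = 2 * (Fintype.card V - 1) := by
  exact euler_aux (Fintype.card V) T le_rfl hT hE r
end

section
/- Let T be a finite tree, let w be an Euler tour of T rooted at a vertex r, let c be an edge of T with labels c_in < c_out, and let e be an edge of T distinct from c with labels e_in < e_out. Then both endpoints of e lie in the connected component of T with the edge c deleted that does not contain r if and only if c_in < e_in and e_out < c_out. -/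
open SimpleGraph

/-- `EdgeLabels w e i j` says that `i < j` are positions in the dart list of the closed walk
`w` at which darts of the edge `e` occur; for an Euler tour these are the two labels
`e_in = i` and `e_out = j` of the edge `e`. -/
def EdgeLabels {V : Type*} {G : SimpleGraph V} {r : V} (w : G.Walk r r)
    (e : Sym2 V) (i j : ℕ) : Prop :=
  i < j ∧ ∃ (hi : i < w.darts.length) (hj : j < w.darts.length),
    (w.darts.get ⟨i, hi⟩).edge = e ∧ (w.darts.get ⟨j, hj⟩).edge = e

lemma darts_get_edge {V : Type*} {G : SimpleGraph V} {u v : V} (w : G.Walk u v) :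
    ∀ (i : ℕ) (h : i < w.darts.length),
      (w.darts.get ⟨i, h⟩).edge = s(w.getVert i, w.getVert (i + 1)) := by
  induction w with
  | nil => intro i h; simp at h
  | cons hadj p ih =>
    intro i h
    cases i with
    | zero => simp [Walk.getVert, SimpleGraph.Dart.edge]
    | succ n =>
      have h' : n < p.darts.length := by simpa [Walk.darts] using h
      simpa [Walk.darts, Walk.getVert] using ih n h'

lemma reach_seg {V : Type*} {G : SimpleGraph V} {u v : V} (w : G.Walk u v) (c : Sym2 V)
    (a : ℕ) : ∀ (b : ℕ), a ≤ b → b ≤ w.length →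
    (∀ (k : ℕ) (hk : k < w.darts.length), a ≤ k → k < b →
      (w.darts.get ⟨k, hk⟩).edge ≠ c) →
    (G.deleteEdges {c}).Reachable (w.getVert a) (w.getVert b) := by
  intro b
  induction b with
  | zero => intro hab _ _; obtain rfl : a = 0 := Nat.le_zero.mp hab; exact Reachable.refl _
  | succ n ih =>
    intro hab hbn hne
    rcases Nat.lt_or_ge a (n + 1) with h | h
    · have han : a ≤ n := Nat.lt_succ_iff.mp h
      have hr : (G.deleteEdges {c}).Reachable (w.getVert a) (w.getVert n) :=
        ih han (Nat.le_of_succ_le hbn) (fun k hk h1 h2 => hne k hk h1 (Nat.lt_succ_of_lt h2))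
      have hn' : n < w.length := hbn
      have hk : n < w.darts.length := by rwa [Walk.length_darts]
      have hadj : (G.deleteEdges {c}).Adj (w.getVert n) (w.getVert (n + 1)) := by
        rw [deleteEdges_adj]
        refine ⟨w.adj_getVert_succ hn', ?_⟩
        have := hne n hk (Nat.le_of_lt_succ h) (Nat.lt_succ_self n)
        rw [darts_get_edge w n hk] at this
        simpa using this
      exact hr.trans hadj.reachable
    · obtain rfl : a = n + 1 := le_antisymm hab h
      exact Reachable.refl _

/-- Let `w` be an Euler tour of a finite tree `T` rooted at `r`, let `c` be an
edge of `T` with labels `c_in < c_out`, and let `e ≠ c` be an edge of `T` with labels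
`e_in < e_out`.  Then both endpoints of `e` lie in the connected component of `T \ c` not
containing `r` iff `c_in < e_in` and `e_out < c_out`. -/
theorem edge_in_far_component_iff {V : Type*} [Fintype V] {T : SimpleGraph V}
    (hT : T.IsTree) {r : V} {w : T.Walk r r} (hw : w.IsEulerTour)
    {c : Sym2 V} (hc : c ∈ T.edgeSet) {c_in c_out : ℕ} (hcl : EdgeLabels w c c_in c_out)
    {e : Sym2 V} (he : e ∈ T.edgeSet) (hec : e ≠ c) {e_in e_out : ℕ}
    (hel : EdgeLabels w e e_in e_out) :
    (∀ v ∈ e, ¬ (T.deleteEdges {c}).Reachable r v) ↔ (c_in < e_in ∧ e_out < c_out) := by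
  classical
  obtain ⟨hcio, hci, hco, hcie, hcoe⟩ := hcl
  obtain ⟨heio, hei, heo, heie, heoe⟩ := hel
  have hnd : w.darts.Nodup := by
    rw [List.nodup_iff_count_le_one]
    intro d
    have h := hw d
    rw [Subsingleton.elim (Classical.decEq T.Dart)
      (by infer_instance : DecidableEq T.Dart)] at h
    exact le_of_eq h
  -- the only positions whose dart has edge c are c_in and c_out
  have hcc : c_in ≠ c_out := Nat.ne_of_lt hcio
  have hpos : ∀ (k : ℕ) (hk : k < w.darts.length),
      (w.darts.get ⟨k, hk⟩).edge = c → k = c_in ∨ k = c_out := by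
    intro k hk hkc
    have h1 : (w.darts.get ⟨k, hk⟩).edge = (w.darts.get ⟨c_in, hci⟩).edge := by
      rw [hkc, hcie]
    rw [dart_edge_eq_iff] at h1
    have hout : (w.darts.get ⟨c_out, hco⟩).edge = (w.darts.get ⟨c_in, hci⟩).edge := by
      rw [hcie, hcoe]
    rw [dart_edge_eq_iff] at hout
    have hne : w.darts.get ⟨c_out, hco⟩ ≠ w.darts.get ⟨c_in, hci⟩ := by
      intro h
      exact hcc ((Fin.mk.injEq _ _ _ _).mp ((List.Nodup.get_inj_iff hnd).mp h)).symm
    have hout' : w.darts.get ⟨c_out, hco⟩ = (w.darts.get ⟨c_in, hci⟩).symm :=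
      hout.resolve_left hne
    rcases h1 with h1 | h1
    · left
      exact (Fin.mk.injEq _ _ _ _).mp ((List.Nodup.get_inj_iff hnd).mp h1)
    · right
      rw [← hout'] at h1
      exact (Fin.mk.injEq _ _ _ _).mp ((List.Nodup.get_inj_iff hnd).mp h1)
  have hLd : w.darts.length = w.length := Walk.length_darts w
  -- c as an edge between consecutive vertices
  have hcedge : c = s(w.getVert c_in, w.getVert (c_in + 1)) := by
    rw [← hcie, darts_get_edge]
  -- bridge: the endpoints of c are not reachable in T \ c
  have hbridge : ¬ (T.deleteEdges {c}).Reachable (w.getVert c_in) (w.getVert (c_in + 1)) := by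
    have hb := (isAcyclic_iff_forall_edge_isBridge.mp hT.2) hc
    rw [hcedge] at hb
    rw [isBridge_iff] at hb
    rw [hcedge]
    exact hb
  -- near side: positions ≤ c_in are reachable from r
  have hnear : ∀ k : ℕ, k ≤ c_in → (T.deleteEdges {c}).Reachable r (w.getVert k) := by
    intro k hk
    have := reach_seg w c 0 k (Nat.zero_le _) (le_trans hk (le_of_lt (hLd ▸ hci)))
      (fun j hj _ hjk => by
        intro hjc
        rcases hpos j hj hjc with rfl | rfl
        · omega
        · omega)
    simpa using this
  -- near side: positions > c_out are reachable from r
  have hnear2 : ∀ k : ℕ, c_out < k → k ≤ w.length →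
      (T.deleteEdges {c}).Reachable r (w.getVert k) := by
    intro k hk hkn
    have := reach_seg w c k w.length hkn le_rfl
      (fun j hj hjk _ => by
        intro hjc
        rcases hpos j hj hjc with rfl | rfl
        · omega
        · omega)
    rw [Walk.getVert_length] at this
    exact this.symm
  -- far side: positions in (c_in, c_out] are not reachable from r
  have hfar : ∀ k : ℕ, c_in < k → k ≤ c_out →
      ¬ (T.deleteEdges {c}).Reachable r (w.getVert k) := by
    intro k hk1 hk2 hr
    have hseg := reach_seg w c (c_in + 1) k hk1 (le_trans hk2 (le_of_lt (hLd ▸ hco)))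
      (fun j hj hj1 hj2 => by
        intro hjc
        rcases hpos j hj hjc with rfl | rfl
        · omega
        · omega)
    exact hbridge (((hnear c_in le_rfl).symm.trans hr).trans hseg.symm)
  -- positions of e differ from positions of c
  have heic : e_in ≠ c_in := fun h => hec (by subst h; exact heie.symm.trans hcie)
  have heic' : e_in ≠ c_out := fun h => hec (by subst h; exact heie.symm.trans hcoe)
  have heoc : e_out ≠ c_in := fun h => hec (by subst h; exact heoe.symm.trans hcie)
  have heoc' : e_out ≠ c_out := fun h => hec (by subst h; exact heoe.symm.trans hcoe)
  have heedge : e = s(w.getVert e_in, w.getVert (e_in + 1)) := by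
    rw [← heie, darts_get_edge]
  have heedge' : e = s(w.getVert e_out, w.getVert (e_out + 1)) := by
    rw [← heoe, darts_get_edge]
  constructor
  · intro hfarall
    by_contra hcon
    rcases Nat.lt_or_ge e_in c_in with h1 | h1
    · -- endpoint at position e_in ≤ c_in is near
      exact hfarall (w.getVert e_in)
        (by rw [heedge]; exact Sym2.mem_mk_left _ _) (hnear e_in (le_of_lt h1))
    · have h1' : c_in < e_in := lt_of_le_of_ne h1 (Ne.symm heic)
      have h2 : c_out < e_out := by
        rcases Nat.lt_or_ge e_out c_out with h2 | h2
        · exact absurd ⟨h1', h2⟩ hcon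
        · exact lt_of_le_of_ne h2 (Ne.symm heoc')
      exact hfarall (w.getVert (e_out + 1))
        (by rw [heedge']; exact Sym2.mem_mk_right _ _)
        (hnear2 (e_out + 1) (Nat.lt_succ_of_lt h2) (hLd ▸ heo))
  · rintro ⟨h1, h2⟩ v hv
    rw [heedge, Sym2.mem_iff] at hv
    rcases hv with rfl | rfl
    · exact hfar e_in h1 (le_of_lt (lt_trans heio h2))
    · exact hfar (e_in + 1) (Nat.lt_succ_of_lt h1)
        (le_of_lt (lt_of_le_of_lt heio h2))
end

section
/- Let T be a finite tree, let w be an Euler tour of T rooted at a vertex r, and let s be a vertex of T with s ≠ r. Then the edge incident to s whose smaller label e_in is minimal among all edges of T incident to s and the edge incident to s whose larger label e_out is maximal among all edges of T incident to s are the same edge. Equivalently, there is a single edge p incident to s (the parent edge of s with respect to r) such that p_in ≤ e_in and p_out ≥ e_out for every edge e of T incident to s. -/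
open SimpleGraph

private lemma darts_getElem_toProd {V : Type*} {G : SimpleGraph V} {u v : V} (w : G.Walk u v) :
    ∀ (k : ℕ) (hk : k < w.darts.length),
      (w.darts.get ⟨k, hk⟩).toProd = (w.getVert k, w.getVert (k + 1)) := by
  induction w with
  | nil => intro k hk; simp at hk
  | cons h q ih =>
    intro k hk
    match k with
    | 0 => simp [SimpleGraph.Walk.getVert_cons_succ, SimpleGraph.Walk.getVert_zero]
    | (k+1) =>
      have hk' : k < q.darts.length := by simpa using hk
      have := ih k hk'
      simpa [SimpleGraph.Walk.getVert_cons_succ] using this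


/-- Let `w` be an Euler tour of a finite tree `T` rooted at `r` and let
`s ≠ r` be a vertex.  Then there is a single edge `p` of `T` incident to `s` (the parent edge
of `s` with respect to `r`) whose labels satisfy `p_in ≤ e_in` and `p_out ≥ e_out` for the
labels of every edge `e` of `T` incident to `s`. -/
theorem exists_unique_parent_edge {V : Type*} [Fintype V] {T : SimpleGraph V}
    (hT : T.IsTree) {r : V} {w : T.Walk r r} (hw : w.IsEulerTour)
    (s : V) (hs : s ≠ r) :
    ∃! p : Sym2 V, p ∈ T.edgeSet ∧ s ∈ p ∧
      ∃ p_in p_out : ℕ, EdgeLabels w p p_in p_out ∧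
        ∀ e ∈ T.edgeSet, s ∈ e → ∀ e_in e_out : ℕ, EdgeLabels w e e_in e_out →
          p_in ≤ e_in ∧ e_out ≤ p_out := by
  classical
  letI : DecidableEq T.Dart := Classical.decEq _
  have hw' : ∀ d : T.Dart, w.darts.count d = 1 := hw
  -- find the neighbour `u` of `s` towards `r`
  obtain ⟨q0⟩ := hT.isConnected s r
  obtain ⟨u, hsu, q', hq'⟩ := SimpleGraph.Walk.not_nil_iff.mp
    ((q0.toPath : T.Walk s r).not_nil_of_ne hs)
  have hqp : (q0.toPath : T.Walk s r).IsPath := q0.toPath.2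
  rw [hq', SimpleGraph.Walk.cons_isPath_iff] at hqp
  have hus : T.Adj u s := hsu.symm
  set p : Sym2 V := s(u, s) with hp
  set T' : SimpleGraph V := T \ fromEdgeSet {p} with hT'
  -- bridge: u and s are not reachable in T'
  have hbridge : ¬ T'.Reachable u s := by
    have hb : T.IsBridge s(u, s) :=
      isAcyclic_iff_forall_edge_isBridge.mp hT.IsAcyclic (T.mem_edgeSet.mpr hus)
    exact isBridge_iff.mp hb
  -- r is on u's side
  have hr_not : ¬ T'.Reachable r s := by
    intro hr
    apply hbridge
    have hpe : ∀ e ∈ q'.edges, e ∉ ({p} : Set (Sym2 V)) := by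
      intro e he hmem
      rw [Set.mem_singleton_iff] at hmem
      subst hmem
      exact hqp.2 (q'.snd_mem_support_of_mem_edges he)
    have q'' : T'.Walk u r := q'.toDeleteEdges {p} hpe
    exact (Walk.reachable q'').trans hr
  -- the two darts of p
  set d₁ : T.Dart := ⟨(u, s), hus⟩ with hd₁
  set d₂ : T.Dart := ⟨(s, u), hsu⟩ with hd₂
  have hd₁e : d₁.edge = p := rfl
  have hd₂e : d₂.edge = p := Sym2.eq_swap
  have hd₁₂ : d₁ ≠ d₂ := by
    intro h
    exact hus.ne (congrArg (fun d => d.toProd.1) h)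
  have hedge : ∀ d : T.Dart, d.edge = p → d = d₁ ∨ d = d₂ := by
    intro d hd
    have : s(d.toProd.1, d.toProd.2) = s(u, s) := hd
    rcases Sym2.eq_iff.mp this with ⟨h1, h2⟩ | ⟨h1, h2⟩
    · left; exact SimpleGraph.Dart.ext _ _ (Prod.ext h1 h2)
    · right; exact SimpleGraph.Dart.ext _ _ (Prod.ext h1 h2)
  set L : List T.Dart := w.darts with hL
  have hLen : L.length = w.length := w.length_darts
  have hnd : L.Nodup := List.nodup_iff_count_le_one.mpr fun d => (hw' d).le
  -- positions of the two darts of p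
  obtain ⟨i, hiL, hLi⟩ := List.getElem_of_mem (List.count_pos_iff.mp (by rw [hw' d₁]; norm_num))
  obtain ⟨j, hjL, hLj⟩ := List.getElem_of_mem (List.count_pos_iff.mp (by rw [hw' d₂]; norm_num))
  have huniq : ∀ k (hk : k < L.length) (m) (hm : m < L.length), L[k] = L[m] → k = m := by
    intro k hk m hm h
    have := (hnd.get_inj_iff (i := ⟨k, hk⟩) (j := ⟨m, hm⟩)).mp (by simpa using h)
    exact congrArg Fin.val this
  -- counting helper
  have hcnt : ∀ (d : T.Dart) k (hk : k < L.length),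
      (L.take (k+1)).count d = (L.take k).count d + if L[k] = d then 1 else 0 := by
    intro d k hk
    rw [List.take_succ, List.count_append, List.getElem?_eq_getElem hk]
    simp [List.count_singleton', eq_comm]
  have hmono : ∀ (d : T.Dart) k, (L.take k).count d ≤ L.count d :=
    fun d k => (List.take_sublist k L).count_le d
  -- key invariant
  have key : ∀ k, (T'.Reachable (w.getVert k) s ↔
      ((L.take k).count d₁ = 1 ∧ (L.take k).count d₂ = 0)) ∧
      (L.take k).count d₂ ≤ (L.take k).count d₁ := by
    intro k
    induction k with
    | zero =>
      refine ⟨?_, le_refl _⟩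
      simp only [List.take_zero, List.count_nil, SimpleGraph.Walk.getVert_zero]
      constructor
      · intro h; exact absurd h hr_not
      · intro h; omega
    | succ k ih =>
      by_cases hk : k < L.length
      · have hprod := darts_getElem_toProd w k (by rwa [← hL])
        have hfst : (L[k]).fst = w.getVert k := congrArg Prod.fst hprod
        have hsnd : (L[k]).snd = w.getVert (k+1) := congrArg Prod.snd hprod
        by_cases hce : (L[k]).edge = p
        · rcases hedge _ hce with hLk | hLk
          · -- dart k is d₁ : u → s
            have hgk : w.getVert k = u := by rw [← hfst, hLk]
            have hgk1 : w.getVert (k+1) = s := by rw [← hsnd, hLk]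
            have hc1 : (L.take k).count d₁ = 0 := by
              have h2 := hmono d₁ (k+1)
              rw [hw' d₁] at h2
              rw [hcnt d₁ k hk, if_pos hLk] at h2
              omega
            have hc2 : (L.take k).count d₂ = 0 := by
              have := ih.2; omega
            rw [hcnt d₁ k hk, if_pos hLk, hcnt d₂ k hk,
              if_neg (fun h => hd₁₂ (hLk.symm.trans h)), hc1, hc2]
            refine ⟨?_, by omega⟩
            rw [hgk1]
            exact ⟨fun _ => by omega, fun _ => Reachable.refl s⟩
          · -- dart k is d₂ : s → u
            have hgk : w.getVert k = s := by rw [← hfst, hLk]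
            have hgk1 : w.getVert (k+1) = u := by rw [← hsnd, hLk]
            have hside : T'.Reachable (w.getVert k) s := by
              rw [hgk]
            obtain ⟨hc1, hc2⟩ := ih.1.mp hside
            rw [hcnt d₂ k hk, if_pos hLk, hcnt d₁ k hk,
              if_neg (fun h => hd₁₂ (h.symm.trans hLk)), hc1, hc2]
            refine ⟨?_, by omega⟩
            rw [hgk1]
            constructor
            · intro h; exact absurd h hbridge
            · intro h; exact absurd h.2 (by omega)
        · -- dart k is not a dart of p
          have hadj' : T'.Adj (w.getVert k) (w.getVert (k+1)) := by
            rw [hT', SimpleGraph.sdiff_adj]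
            constructor
            · rw [← hfst, ← hsnd]; exact (L[k]).adj
            · rw [SimpleGraph.fromEdgeSet_adj]
              rintro ⟨hmem, -⟩
              rw [Set.mem_singleton_iff] at hmem
              apply hce
              rw [← hfst, ← hsnd] at hmem
              exact hmem
          have hne₁ : L[k] ≠ d₁ := fun h => hce (h ▸ hd₁e ▸ rfl)
          have hne₂ : L[k] ≠ d₂ := fun h => hce (h ▸ hd₂e ▸ rfl)
          rw [hcnt d₁ k hk, if_neg hne₁, hcnt d₂ k hk, if_neg hne₂]
          refine ⟨?_, ih.2⟩
          have hiff : T'.Reachable (w.getVert (k+1)) s ↔ T'.Reachable (w.getVert k) s :=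
            ⟨fun h => (hadj'.reachable).trans h, fun h => (hadj'.symm.reachable).trans h⟩
          rw [Nat.add_zero, Nat.add_zero, hiff]
          exact ih.1
      · push_neg at hk
        have ht : L.take (k+1) = L.take k := by
          rw [List.take_of_length_le hk, List.take_of_length_le (by omega)]
        have hg : w.getVert (k+1) = w.getVert k := by
          rw [w.getVert_of_length_le (by omega : w.length ≤ k+1),
            w.getVert_of_length_le (by rw [← hLen]; exact hk)]
        rw [ht, hg]
        exact ih
  -- consequences
  have hA : ∀ m, T'.Reachable (w.getVert m) s → i < m ∧ m ≤ j := by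
    intro m hm
    obtain ⟨h1, h2⟩ := (key m).1.mp hm
    constructor
    · have hmem : d₁ ∈ L.take m := List.count_pos_iff.mp (by rw [h1]; norm_num)
      obtain ⟨k, hk, hkE⟩ := List.getElem_of_mem hmem
      have hkm : k < m := lt_of_lt_of_le hk (by simp [List.length_take])
      have hkL : k < L.length := lt_of_lt_of_le hk (by simp [List.length_take])
      have : L[k] = d₁ := by rw [List.getElem_take] at hkE; exact hkE
      have := huniq k hkL i hiL (by rw [this, hLi])
      omega
    · by_contra h
      push_neg at h
      have hmem : d₂ ∈ L.take m := by
        have hjt : j < (L.take m).length := by simp only [List.length_take]; omega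
        have hth : (L.take m)[j]'hjt = d₂ := by rw [List.getElem_take]; exact hLj
        exact hth ▸ List.getElem_mem hjt
      rw [← List.count_pos_iff] at hmem
      omega
  have hij : i < j := by
    have h1 : w.getVert (i+1) = s := by
      have := congrArg Prod.snd (darts_getElem_toProd w i (by rwa [← hL]))
      rw [show (L.get ⟨i, hiL⟩) = d₁ from hLi] at this
      exact this.symm
    have := hA (i+1) (by rw [h1])
    omega
  have hbetween : ∀ k (hk : k < L.length), s ∈ (L[k]).edge → (L[k]).edge ≠ p →
      i < k ∧ k < j := by
    intro k hk hmem hne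
    have hprod := darts_getElem_toProd w k (by rwa [← hL])
    have hfst : (L[k]).fst = w.getVert k := congrArg Prod.fst hprod
    have hsnd : (L[k]).snd = w.getVert (k+1) := congrArg Prod.snd hprod
    have hknei : k ≠ i := fun h => hne (by subst h; rw [hLi]; exact hd₁e)
    have hknej : k ≠ j := fun h => hne (by subst h; rw [hLj]; exact hd₂e)
    rcases Sym2.mem_iff.mp hmem with h | h
    · have : w.getVert k = s := by rw [← hfst, ← h]
      have := hA k (by rw [this])
      omega
    · have : w.getVert (k+1) = s := by rw [← hsnd, ← h]
      have := hA (k+1) (by rw [this])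
      omega
  have hpos : ∀ {k} (hk : k < L.length), (L.get ⟨k, hk⟩).edge = p → k = i ∨ k = j := by
    intro k hk he
    rw [List.get_eq_getElem] at he
    rcases hedge _ he with h | h
    · exact Or.inl (huniq k hk i hiL (h.trans hLi.symm))
    · exact Or.inr (huniq k hk j hjL (h.trans hLj.symm))
  have hplabels : EdgeLabels w p i j := by
    refine ⟨hij, hiL, hjL, ?_, ?_⟩
    · rw [List.get_eq_getElem, hLi]; exact hd₁e
    · rw [List.get_eq_getElem, hLj]; exact hd₂e
  have hmin : ∀ e ∈ T.edgeSet, s ∈ e → ∀ e_in e_out : ℕ, EdgeLabels w e e_in e_out →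
      i ≤ e_in ∧ e_out ≤ j := by
    intro e he hse e_in e_out ⟨hlt, hi', hj', he1, he2⟩
    rw [List.get_eq_getElem] at he1 he2
    by_cases hep : e = p
    · subst hep
      rcases hpos hi' he1 with h | h <;> rcases hpos hj' he2 with h' | h' <;> omega
    · have h1 := hbetween e_in hi' (by rw [he1]; exact hse) (by rw [he1]; exact hep)
      have h2 := hbetween e_out hj' (by rw [he2]; exact hse) (by rw [he2]; exact hep)
      omega
  refine ⟨p, ⟨T.mem_edgeSet.mpr hus, Sym2.mem_mk_right u s, i, j, hplabels, hmin⟩, ?_⟩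
  rintro y ⟨hyE, hys, a, b, hab, hymin⟩
  obtain ⟨h1, h2⟩ := hymin p (T.mem_edgeSet.mpr hus) (Sym2.mem_mk_right u s) i j hplabels
  obtain ⟨h3, h4⟩ := hmin y hyE hys a b hab
  have hai : a = i := le_antisymm h1 h3
  obtain ⟨hlt, ha', hb', hy1, hy2⟩ := hab
  rw [List.get_eq_getElem] at hy1
  subst hai
  rw [← hy1, hLi]
  exact hd₁e
end

section
/- Let T be a finite tree, let w be an Euler tour of T rooted at a vertex r, and let c be an edge of T with labels c_in < c_out. Then the darts of w occurring at positions strictly between c_in and c_out are precisely the darts of those edges of T whose endpoints both lie in the connected component of T with c deleted that does not contain r, and each such dart occurs exactly once among these positions. -/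
open SimpleGraph

lemma darts_get_fst' {V : Type*} {G : SimpleGraph V} {u v : V} (p : G.Walk u v) (i : ℕ)
    (hi : i < p.darts.length) : (p.darts.get ⟨i, hi⟩).fst = p.getVert i := by
  induction p generalizing i with
  | nil => simp at hi
  | cons h q ih =>
    match i with
    | 0 => rfl
    | n+1 => exact ih n (Nat.lt_of_succ_lt_succ hi)

lemma darts_get_snd' {V : Type*} {G : SimpleGraph V} {u v : V} (p : G.Walk u v) (i : ℕ)
    (hi : i < p.darts.length) : (p.darts.get ⟨i, hi⟩).snd = p.getVert (i+1) := by
  induction p generalizing i with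
  | nil => simp at hi
  | cons h q ih =>
    match i with
    | 0 => exact (q.getVert_zero).symm
    | n+1 => exact ih n (Nat.lt_of_succ_lt_succ hi)

lemma dart_edge_eq' {V : Type*} {G : SimpleGraph V} (d : G.Dart) :
    d.edge = s(d.fst, d.snd) := rfl

/-- Along any walk in `T`, either the endpoint stays reachable after deleting the edge
`s(a,b)`, or we at some point stand at `a` or `b`. -/
lemma reach_endpoints' {V : Type*} {T : SimpleGraph V} {a b : V} :
    ∀ {u v : V} (_ : T.Walk u v), (T.deleteEdges {s(a,b)}).Reachable u v ∨
      (T.deleteEdges {s(a,b)}).Reachable u a ∨ (T.deleteEdges {s(a,b)}).Reachable u b := by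
  intro u v p
  induction p with
  | nil => exact Or.inl (Reachable.refl _)
  | @cons x y z h q ih =>
    by_cases he : s(x, y) = s(a, b)
    · rcases Sym2.eq_iff.mp he with ⟨rfl, rfl⟩ | ⟨rfl, rfl⟩
      · exact Or.inr (Or.inl (Reachable.refl _))
      · exact Or.inr (Or.inr (Reachable.refl _))
    · have hadj : (T.deleteEdges {s(a,b)}).Adj x y := by
        rw [SimpleGraph.deleteEdges_adj]
        exact ⟨h, by simpa using he⟩
      rcases ih with h1 | h1 | h1
      · exact Or.inl (hadj.reachable.trans h1)
      · exact Or.inr (Or.inl (hadj.reachable.trans h1))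
      · exact Or.inr (Or.inr (hadj.reachable.trans h1))

/-- Let `w` be an Euler tour of a finite tree `T` rooted at `r` and let `c`
be an edge of `T` with labels `c_in < c_out`.  The darts occurring in `w` at positions strictly
between `c_in` and `c_out` are precisely the darts of the edges of `T` both of whose endpoints
lie in the connected component of `T \ c` not containing `r`, with each such dart occurring
exactly once among those positions. -/
theorem darts_between_labels {V : Type*} [Fintype V] {T : SimpleGraph V}
    (hT : T.IsTree) {r : V} {w : T.Walk r r} (hw : w.IsEulerTour)
    {c : Sym2 V} (hc : c ∈ T.edgeSet) {c_in c_out : ℕ} (hcl : EdgeLabels w c c_in c_out) :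
    ∀ d : T.Dart,
      (∀ v ∈ d.edge, ¬ (T.deleteEdges {c}).Reachable r v) ↔
        (∃! i : ℕ, ∃ hi : i < w.darts.length,
          c_in < i ∧ i < c_out ∧ w.darts.get ⟨i, hi⟩ = d) := by
  letI : DecidableEq T.Dart := Classical.decEq _
  have hwd : ∀ d : T.Dart, w.darts.count d = 1 := hw
  have hnodup : w.darts.Nodup := List.nodup_iff_count_le_one.mpr fun d => (hwd d).le
  revert hc hcl
  induction c using Sym2.ind with
  | _ a b =>
  intro hc hcl
  obtain ⟨hio, hein, heout, hedgein, hedgeout⟩ := hcl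
  -- the deleted edge is a bridge
  have hbridge : ¬ (T.deleteEdges {s(a,b)}).Reachable a b := by
    have hb := (isAcyclic_iff_forall_edge_isBridge.mp hT.2) hc
    exact isBridge_iff.mp hb
  -- r reaches exactly one of a, b after deleting the edge
  have hone : (T.deleteEdges {s(a,b)}).Reachable r a ∨ (T.deleteEdges {s(a,b)}).Reachable r b := by
    obtain ⟨p⟩ := hT.1.preconnected r a
    rcases reach_endpoints' (a := a) (b := b) p with h | h | h
    · exact Or.inl h
    · exact Or.inl h
    · exact Or.inr h
  have hnotboth : ¬ ((T.deleteEdges {s(a,b)}).Reachable r a ∧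
      (T.deleteEdges {s(a,b)}).Reachable r b) :=
    fun ⟨h1, h2⟩ => hbridge (h1.symm.trans h2)
  -- crossing the deleted edge flips reachability
  have hflip : ∀ u v : V, s(u,v) = s(a,b) →
      (¬ (T.deleteEdges {s(a,b)}).Reachable r u ↔ (T.deleteEdges {s(a,b)}).Reachable r v) := by
    intro u v huv
    rcases Sym2.eq_iff.mp huv with ⟨rfl, rfl⟩ | ⟨rfl, rfl⟩ <;> tauto
  -- any other edge preserves reachability
  have hpres : ∀ u v : V, T.Adj u v → s(u,v) ≠ s(a,b) →
      ((T.deleteEdges {s(a,b)}).Reachable r u ↔ (T.deleteEdges {s(a,b)}).Reachable r v) := by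
    intro u v huv hne
    have hadj : (T.deleteEdges {s(a,b)}).Adj u v := by
      rw [SimpleGraph.deleteEdges_adj]
      exact ⟨huv, by simpa using hne⟩
    exact ⟨fun h => h.trans hadj.reachable, fun h => h.trans hadj.symm.reachable⟩
  -- the darts whose edge is the deleted edge occur exactly at positions c_in and c_out
  have hedge_iff : ∀ (i : ℕ) (hi : i < w.darts.length),
      ((w.darts.get ⟨i, hi⟩).edge = s(a,b) ↔ (i = c_in ∨ i = c_out)) := by
    intro i hi
    constructor
    · intro he
      have hne : (⟨c_in, hein⟩ : Fin w.darts.length) ≠ ⟨c_out, heout⟩ := by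
        intro h
        have := congrArg Fin.val h
        simp at this
        omega
      have hdne : w.darts.get ⟨c_in, hein⟩ ≠ w.darts.get ⟨c_out, heout⟩ :=
        fun h => hne ((hnodup.get_inj_iff).mp h)
      have h1 := (dart_edge_eq_iff (w.darts.get ⟨i, hi⟩) (w.darts.get ⟨c_in, hein⟩)).mp
        (he.trans hedgein.symm)
      rcases h1 with h1 | h1
      · exact Or.inl (by simpa using congrArg Fin.val ((hnodup.get_inj_iff).mp h1))
      · have h2 := (dart_edge_eq_iff (w.darts.get ⟨c_out, heout⟩) (w.darts.get ⟨c_in, hein⟩)).mp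
          (hedgeout.trans hedgein.symm)
        rcases h2 with h2 | h2
        · exact absurd h2.symm hdne
        · have h3 : w.darts.get ⟨i, hi⟩ = w.darts.get ⟨c_out, heout⟩ := by rw [h1, h2]
          exact Or.inr (by simpa using congrArg Fin.val ((hnodup.get_inj_iff).mp h3))
    · rintro (rfl | rfl)
      · exact hedgein
      · exact hedgeout
  -- parity lemma: the vertex at time i is in the far component iff c_in < i ≤ c_out
  have key : ∀ i : ℕ, i ≤ w.darts.length →
      (¬ (T.deleteEdges {s(a,b)}).Reachable r (w.getVert i) ↔ (c_in < i ∧ i ≤ c_out)) := by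
    intro i
    induction i with
    | zero =>
      intro _
      rw [SimpleGraph.Walk.getVert_zero]
      constructor
      · intro h; exact absurd (Reachable.refl r) h
      · intro h; omega
    | succ i ih =>
      intro hsi
      have hi : i < w.darts.length := hsi
      have ihh := ih hi.le
      have hf := darts_get_fst' w i hi
      have hs := darts_get_snd' w i hi
      by_cases hce : (w.darts.get ⟨i, hi⟩).edge = s(a,b)
      · have hcross : ¬ (T.deleteEdges {s(a,b)}).Reachable r (w.getVert i) ↔
            (T.deleteEdges {s(a,b)}).Reachable r (w.getVert (i+1)) := by
          apply hflip
          rw [← hf, ← hs]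
          exact hce
        rcases (hedge_iff i hi).mp hce with rfl | rfl
        · have h1 : (T.deleteEdges {s(a,b)}).Reachable r (w.getVert i) := by
            by_contra hcon
            have := ihh.mp hcon
            omega
          exact iff_of_true (fun hcon => (hcross.mpr hcon) h1) (by omega)
        · have h1 : ¬ (T.deleteEdges {s(a,b)}).Reachable r (w.getVert i) :=
            ihh.mpr ⟨hio, le_refl _⟩
          exact iff_of_false (fun h => h (hcross.mp h1)) (by omega)
      · have hne1 : i ≠ c_in := fun h => hce ((hedge_iff i hi).mpr (Or.inl h))
        have hne2 : i ≠ c_out := fun h => hce ((hedge_iff i hi).mpr (Or.inr h))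
        have hadj : T.Adj (w.getVert i) (w.getVert (i+1)) := by
          rw [← hf, ← hs]
          exact (w.darts.get ⟨i, hi⟩).adj
        have hsame := hpres _ _ hadj (by rw [← hf, ← hs]; exact hce)
        constructor
        · intro h
          have h' : ¬ (T.deleteEdges {s(a,b)}).Reachable r (w.getVert i) :=
            fun hr => h (hsame.mp hr)
          have := ihh.mp h'
          omega
        · intro h
          have h2 : c_in < i ∧ i ≤ c_out := by omega
          exact fun hr => (ihh.mpr h2) (hsame.mpr hr)
  -- conclusion
  intro d
  have hmem : d ∈ w.darts := by
    have h1 := hwd d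
    exact List.count_pos_iff.mp (by rw [h1]; norm_num)
  obtain ⟨⟨i₀, hi₀⟩, hget⟩ := List.mem_iff_get.mp hmem
  have hf0 := darts_get_fst' w i₀ hi₀
  have hs0 := darts_get_snd' w i₀ hi₀
  constructor
  · intro hFar
    have hfa : ¬ (T.deleteEdges {s(a,b)}).Reachable r d.fst :=
      hFar d.fst (by rw [dart_edge_eq']; exact Sym2.mem_mk_left _ _)
    have hfb : ¬ (T.deleteEdges {s(a,b)}).Reachable r d.snd :=
      hFar d.snd (by rw [dart_edge_eq']; exact Sym2.mem_mk_right _ _)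
    have hA : c_in < i₀ ∧ i₀ ≤ c_out :=
      (key i₀ hi₀.le).mp (by rw [← hf0, hget]; exact hfa)
    have hB : c_in < i₀ + 1 ∧ i₀ + 1 ≤ c_out :=
      (key (i₀+1) hi₀).mp (by rw [← hs0, hget]; exact hfb)
    refine ⟨i₀, ⟨hi₀, hA.1, by omega, hget⟩, ?_⟩
    rintro j ⟨hj, -, -, hgj⟩
    have h3 : (⟨j, hj⟩ : Fin w.darts.length) = ⟨i₀, hi₀⟩ :=
      (hnodup.get_inj_iff).mp (hgj.trans hget.symm)
    simpa using congrArg Fin.val h3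
  · rintro ⟨i, ⟨hi, h1, h2, hgi⟩, -⟩
    intro v hv
    rw [dart_edge_eq', Sym2.mem_iff] at hv
    have hfv := darts_get_fst' w i hi
    have hsv := darts_get_snd' w i hi
    rcases hv with rfl | rfl
    · have e1 : d.fst = w.getVert i := by rw [← hgi]; exact hfv
      rw [e1]
      exact (key i hi.le).mpr ⟨h1, by omega⟩
    · have e2 : d.snd = w.getVert (i+1) := by rw [← hgi]; exact hsv
      rw [e2]
      exact (key (i+1) hi).mpr ⟨by omega, by omega⟩
end

section
/- Let T be a spanning tree of a finite connected simple graph G, let F be the set of edges of G not in T, and let M' be the spanning subgraph of T whose edge set consists of those edges e of T for which G with e deleted is still connected. Then every vertex of degree exactly 1 in M' is an endpoint of some edge of F. -/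
open SimpleGraph

/-- Given a connected graph `G` with spanning tree `T`, the spanning subgraph `M'` of `T`
whose edges are exactly those edges of `T` whose deletion from `G` leaves `G` connected. -/
def cycleEdgesSubgraph {V : Type*} (G T : SimpleGraph V) : SimpleGraph V where
  Adj a b := T.Adj a b ∧ (G.deleteEdges {s(a, b)}).Connected
  symm := ⟨fun a b h => ⟨h.1.symm, by rw [Sym2.eq_swap]; exact h.2⟩⟩
  loopless := ⟨fun a h => T.loopless.irrefl a h.1⟩

/-- If `G` is connected and the endpoints of a deleted edge remain reachable,
then the graph with that edge deleted is still connected. -/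
lemma connected_deleteEdges_of_reachable {V : Type*} {G : SimpleGraph V} (hG : G.Connected)
    {a b : V} (h : (G.deleteEdges {s(a, b)}).Reachable a b) :
    (G.deleteEdges {s(a, b)}).Connected := by
  rw [connected_iff]
  refine ⟨fun x y => ?_, hG.nonempty⟩
  obtain ⟨p⟩ := hG.preconnected x y
  induction p with
  | nil => exact Reachable.refl _
  | @cons x u y hadj q ih =>
    refine Reachable.trans ?_ ih
    by_cases he : s(x, u) = s(a, b)
    · rw [Sym2.eq, Sym2.rel_iff'] at he
      rcases he with ⟨rfl, rfl⟩ | ⟨rfl, rfl⟩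
      · exact h
      · exact h.symm
    · exact Adj.reachable (by
        rw [deleteEdges_adj, Set.mem_singleton_iff]; exact ⟨hadj, he⟩)

/-- Let `T` be a spanning tree of a finite connected simple graph `G`, let
`F = G.edgeSet \ T.edgeSet`, and let `M'` be the spanning subgraph of `T` whose edges are the
edges `e` of `T` such that `G` with `e` deleted is still connected.  Then every vertex of
degree exactly `1` in `M'` is an endpoint of some edge of `F`. -/
theorem leaf_of_cycleEdges_touches_nontree_edge {V : Type*} [Fintype V]
    {G T : SimpleGraph V} (hG : G.Connected) (hT : T.IsTree) (hTG : T ≤ G)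
    (v : V) (hv : ((cycleEdgesSubgraph G T).neighborSet v).ncard = 1) :
    ∃ f ∈ G.edgeSet \ T.edgeSet, v ∈ f := by
  classical
  by_contra hcon
  push_neg at hcon
  -- every G-edge at v is a T-edge
  have hall : ∀ x, G.Adj v x → T.Adj v x := by
    intro x hx
    by_contra hTx
    exact hcon s(v, x) ⟨hx, hTx⟩ (Sym2.mem_mk_left v x)
  obtain ⟨w, hw⟩ := Set.ncard_eq_one.mp hv
  have hwv : w ∈ (cycleEdgesSubgraph G T).neighborSet v := by rw [hw]; rfl
  obtain ⟨hTvw, hconn⟩ : T.Adj v w ∧ (G.deleteEdges {s(v, w)}).Connected := hwv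
  have hvw : v ≠ w := hTvw.ne
  obtain ⟨q0⟩ := hconn.preconnected v w
  obtain ⟨p, hp⟩ : ∃ p : (G.deleteEdges {s(v, w)}).Walk v w, p.IsPath := ⟨q0.toPath, q0.toPath.2⟩
  cases p with
  | nil => exact hvw rfl
  | @cons _ u _ had q =>
    rw [Walk.cons_isPath_iff] at hp
    obtain ⟨hqp, hvq⟩ := hp
    rw [deleteEdges_adj] at had
    obtain ⟨hGvu, hne⟩ := had
    simp only [Set.mem_singleton_iff] at hne
    have huw : u ≠ w := by rintro rfl; exact hne rfl
    -- transfer q to G minus the edge s(v,u)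
    have hsub : ∀ e ∈ q.edges, e ∈ (G.deleteEdges {s(v, u)}).edgeSet := by
      intro e he
      have h1 := q.edges_subset_edgeSet he
      rw [edgeSet_deleteEdges] at h1 ⊢
      refine ⟨h1.1, ?_⟩
      simp only [Set.mem_singleton_iff]
      rintro rfl
      exact hvq (q.fst_mem_support_of_mem_edges he)
    have hadjwv : (G.deleteEdges {s(v, u)}).Adj w v := by
      rw [deleteEdges_adj]
      refine ⟨(hTG hTvw).symm, ?_⟩
      rw [Set.mem_singleton_iff]
      intro heq
      rw [Sym2.eq_iff] at heq
      rcases heq with ⟨h1, _⟩ | ⟨h1, _⟩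
      · exact hvw h1.symm
      · exact huw h1.symm
    have hre : (G.deleteEdges {s(v, u)}).Reachable v u :=
      (Reachable.symm ⟨(q.transfer _ hsub).append (Walk.cons hadjwv Walk.nil)⟩)
    have hMu : u ∈ (cycleEdgesSubgraph G T).neighborSet v :=
      ⟨hall u hGvu, connected_deleteEdges_of_reachable hG hre⟩
    rw [hw, Set.mem_singleton_iff] at hMu
    exact huw hMu
end

section
/- Let G be a finite connected simple graph, let T be a spanning tree of G, and let F be the set of edges of G not in T, with |F| = k. Then the edge set of T can be partitioned into at most 4k + 1 sets such that: (1) every edge of T belongs to exactly one set, and (2) for every set S of the partition and every pair of distinct edges e, e' ∈ S, the graph G with both e and e' deleted is disconnected. In particular, at most one edge from each set can be removed from G while keeping the remaining graph connected. -/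
open SimpleGraph

section Auxiliary

open Finset

/-- A laminar family of ≥2-element subsets of `X` has at most `|X|` members. -/
theorem laminar_big_card {α : Type*} [DecidableEq α] :
    ∀ (n : ℕ) (X : Finset α), X.card ≤ n → ∀ (𝓕 : Finset (Finset α)),
      (∀ S ∈ 𝓕, S ⊆ X) → (∀ S ∈ 𝓕, 2 ≤ S.card) →
      (∀ S ∈ 𝓕, ∀ T ∈ 𝓕, S ⊆ T ∨ T ⊆ S ∨ Disjoint S T) →
      𝓕.card ≤ X.card := by
  intro n
  induction n with
  | zero =>
    intro X hX 𝓕 hsub hbig _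
    rcases 𝓕.eq_empty_or_nonempty with rfl | ⟨S, hS⟩
    · simp
    · have h2 := hbig S hS
      have h3 : S.card ≤ X.card := Finset.card_le_card (hsub S hS)
      omega
  | succ n ih =>
    intro X hX 𝓕 hsub hbig hlam
    rcases 𝓕.eq_empty_or_nonempty with rfl | hne
    · simp
    obtain ⟨S, hS, hmin⟩ := 𝓕.exists_minimal hne
    obtain ⟨x₀, hx₀⟩ := Finset.card_pos.mp (show 0 < S.card by have := hbig S hS; omega)
    set E : Finset α := S.erase x₀ with hE
    have hES : E ⊆ S := Finset.erase_subset _ _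
    have hEcard : E.card = S.card - 1 := Finset.card_erase_of_mem hx₀
    have hx₀E : x₀ ∉ E := Finset.notMem_erase _ _
    set X' : Finset α := X \ E with hX'
    have hEX : E ⊆ X := hES.trans (hsub S hS)
    have hX'card : X'.card = X.card - E.card := Finset.card_sdiff_of_subset hEX
    have hkey : ∀ T ∈ 𝓕, T ≠ S → S ⊆ T ∨ Disjoint S T := by
      intro T hT hTS
      rcases hlam S hS T hT with h | h | h
      · exact Or.inl h
      · exact absurd (le_antisymm h (hmin hT h)) hTS
      · exact Or.inr h
    set φ : Finset α → Finset α := fun T => T \ E with hφ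
    have hφdisj : ∀ T, Disjoint S T → φ T = T := by
      intro T h
      exact Finset.sdiff_eq_self_of_disjoint
        (Finset.disjoint_of_subset_right hES h.symm)
    have hφsup : ∀ T, S ⊆ T → φ T ∪ E = T := by
      intro T h
      exact Finset.sdiff_union_of_subset (hES.trans h)
    have hx₀in : ∀ T, S ⊆ T → x₀ ∈ φ T := by
      intro T h
      exact Finset.mem_sdiff.mpr ⟨h hx₀, hx₀E⟩
    have hx₀out : ∀ T, Disjoint S T → x₀ ∉ φ T := by
      intro T h hmem
      exact (Finset.disjoint_left.mp h hx₀) ((Finset.sdiff_subset) hmem)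
    set 𝓕' : Finset (Finset α) := (𝓕.erase S).image φ with h𝓕'
    have hinj : Set.InjOn φ (𝓕.erase S) := by
      intro T₁ h₁ T₂ h₂ heq
      rw [Finset.coe_erase, Set.mem_diff] at h₁ h₂
      have h₁' := hkey T₁ h₁.1 (by simpa using h₁.2)
      have h₂' := hkey T₂ h₂.1 (by simpa using h₂.2)
      rcases h₁' with h₁' | h₁' <;> rcases h₂' with h₂' | h₂'
      · rw [← hφsup T₁ h₁', ← hφsup T₂ h₂', heq]
      · exact absurd (heq ▸ hx₀in T₁ h₁') (hx₀out T₂ h₂')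
      · exact absurd (heq.symm ▸ hx₀in T₂ h₂') (hx₀out T₁ h₁')
      · rwa [hφdisj T₁ h₁', hφdisj T₂ h₂'] at heq
    have hcard' : 𝓕'.card = (𝓕.erase S).card := Finset.card_image_of_injOn hinj
    have hmem' : ∀ A ∈ 𝓕', ∃ T, T ∈ 𝓕 ∧ T ≠ S ∧ A = φ T := by
      intro A hA
      obtain ⟨T, hT, rfl⟩ := Finset.mem_image.mp hA
      obtain ⟨hTne, hT𝓕⟩ := Finset.mem_erase.mp hT
      exact ⟨T, hT𝓕, hTne, rfl⟩
    have hbound : 𝓕'.card ≤ X'.card := by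
      apply ih X' (by have h2 := hbig S hS; have hEX2 := Finset.card_le_card hEX; omega)
      · intro A hA
        obtain ⟨T, hT, -, rfl⟩ := hmem' A hA
        exact Finset.sdiff_subset_sdiff (hsub T hT) Finset.Subset.rfl
      · intro A hA
        obtain ⟨T, hT, hTne, rfl⟩ := hmem' A hA
        rcases hkey T hT hTne with h | h
        · have hss : S ⊂ T := lt_of_le_of_ne h (fun hh => hTne hh.symm)
          obtain ⟨t, htT, htS⟩ := Finset.exists_of_ssubset hss
          have h1 : x₀ ∈ φ T := hx₀in T h
          have h2 : t ∈ φ T := Finset.mem_sdiff.mpr ⟨htT, fun ht => htS (hES ht)⟩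
          have h3 : t ≠ x₀ := fun hh => htS (hh ▸ hx₀)
          have := Finset.one_lt_card.mpr ⟨x₀, h1, t, h2, h3.symm⟩
          omega
        · rw [hφdisj T h]
          exact hbig T hT
      · intro A hA B hB
        obtain ⟨T₁, hT₁, -, rfl⟩ := hmem' A hA
        obtain ⟨T₂, hT₂, -, rfl⟩ := hmem' B hB
        rcases hlam T₁ hT₁ T₂ hT₂ with h | h | h
        · exact Or.inl (Finset.sdiff_subset_sdiff h Finset.Subset.rfl)
        · exact Or.inr (Or.inl (Finset.sdiff_subset_sdiff h Finset.Subset.rfl))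
        · exact Or.inr (Or.inr (Finset.disjoint_of_subset_left Finset.sdiff_subset
            (Finset.disjoint_of_subset_right Finset.sdiff_subset h)))
    have hScard := hbig S hS
    have hSX : S.card ≤ X.card := Finset.card_le_card (hsub S hS)
    have herase : (𝓕.erase S).card = 𝓕.card - 1 := Finset.card_erase_of_mem hS
    have hpos : 1 ≤ 𝓕.card := Finset.card_pos.mpr hne
    omega

/-- Of the two initial segments of a walk ending at two support vertices,
one contains the endpoint of the other. -/
theorem walk_takeUntil_or {V : Type*} [DecidableEq V] {G : SimpleGraph V} {r u : V}
    (w : G.Walk r u) {y y' : V} (hy : y ∈ w.support) (hy' : y' ∈ w.support) :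
    y ∈ (w.takeUntil y' hy').support ∨ y' ∈ (w.takeUntil y hy).support := by
  by_cases h : y ∈ (w.takeUntil y' hy').support
  · exact Or.inl h
  right
  have p1 : (w.takeUntil y' hy').support <+: w.support :=
    ⟨(w.dropUntil y' hy').support.tail, by rw [← Walk.support_append, Walk.take_spec]⟩
  have p2 : (w.takeUntil y hy).support <+: w.support :=
    ⟨(w.dropUntil y hy).support.tail, by rw [← Walk.support_append, Walk.take_spec]⟩
  rcases List.prefix_or_prefix_of_prefix p1 p2 with h12 | h21
  · exact h12.subset (Walk.end_mem_support _)
  · exact absurd (h21.subset (Walk.end_mem_support _)) h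

/-- Appending a new vertex to a path gives a path. -/
theorem isPath_concat_aux {V : Type*} {G : SimpleGraph V} {u v w : V} {q : G.Walk u v}
    (hq : q.IsPath) (h : G.Adj v w) (hw : w ∉ q.support) : (q.concat h).IsPath := by
  rw [Walk.isPath_def, Walk.support_concat, List.nodup_append]
  refine ⟨hq.support_nodup, List.nodup_singleton _, ?_⟩
  intro x hx y hx' hxy
  rw [List.mem_singleton] at hx'
  exact hw (hx' ▸ hxy ▸ hx)

end Auxiliary

set_option maxHeartbeats 2000000 in
/-- Let `T` be a spanning tree of a finite connected simple graph `G` and let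
`F = G.edgeSet \ T.edgeSet` have cardinality `k`.  Then the edge set of `T` can be partitioned
into at most `4 * k + 1` sets such that every edge of `T` lies in exactly one set and, for any
two distinct edges `e ≠ e'` of the same set, deleting both `e` and `e'` from `G` disconnects
`G`; in particular at most one edge per set can be removed while keeping `G` connected. -/
theorem edge_partition_of_spanning_tree {V : Type*} [Fintype V]
    {G T : SimpleGraph V} (hG : G.Connected) (hT : T.IsTree) (hTG : T ≤ G)
    (k : ℕ) (hk : (G.edgeSet \ T.edgeSet).ncard = k) :
    ∃ P : Finset (Set (Sym2 V)),
      P.card ≤ 4 * k + 1 ∧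
      (∀ S ∈ P, S ⊆ T.edgeSet) ∧
      (∀ e ∈ T.edgeSet, ∃! S : Set (Sym2 V), S ∈ P ∧ e ∈ S) ∧
      (∀ S ∈ P, ∀ e ∈ S, ∀ e' ∈ S, e ≠ e' → ¬ (G.deleteEdges {e, e'}).Connected) := by
  classical
  obtain ⟨r⟩ := hT.isConnected.nonempty
  choose p hps using fun u => hT.existsUnique_path r u
  have hp : ∀ u, (p u).IsPath := fun u => (hps u).1
  have huniq : ∀ u (q : T.Walk r u), q.IsPath → q = p u := fun u q hq => (hps u).2 q hq
  have htake : ∀ a b (h : a ∈ (p b).support), (p b).takeUntil a h = p a :=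
    fun a b h => huniq a _ ((hp b).takeUntil h)
  have hsub : ∀ a b (h : a ∈ (p b).support), (p a).support ⊆ (p b).support := by
    intro a b h
    rw [← htake a b h]
    exact Walk.support_takeUntil_subset _ h
  -- the basic step lemma: for adjacent vertices, one path extends the other
  have hstep : ∀ a b (hab : T.Adj a b),
      p b = (p a).concat hab ∨ p a = (p b).concat hab.symm := by
    intro a b hab
    by_cases hb : b ∈ (p a).support
    · right
      have h1 : (p a).takeUntil b hb = p b := htake b a hb
      have ha : a ∉ (p b).support := by
        intro ha
        rw [← h1] at ha
        have hnodup := (hp a).support_nodup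
        conv at hnodup => rw [← Walk.take_spec (p a) hb]
        rw [Walk.support_append, List.nodup_append] at hnodup
        have haend : a ∈ ((p a).dropUntil b hb).support := Walk.end_mem_support _
        rw [Walk.support_eq_cons] at haend
        rcases List.mem_cons.mp haend with h' | h'
        · exact hab.ne h'
        · exact hnodup.2.2 a ha a h' rfl
      have hpath : ((p b).concat hab.symm).IsPath := isPath_concat_aux (hp b) hab.symm ha
      exact (huniq a _ hpath).symm
    · left
      have hpath : ((p a).concat hab).IsPath := isPath_concat_aux (hp a) hab hb
      exact (huniq b _ hpath).symm
  -- choose an orientation for each tree edge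
  have hdata : ∀ e, e ∈ T.edgeSet →
      ∃ x y, ∃ hxy : T.Adj x y, e = s(x, y) ∧ p y = (p x).concat hxy := by
    intro e
    induction e using Sym2.ind with
    | _ a b =>
      intro he
      have hab : T.Adj a b := (T.mem_edgeSet).mp he
      rcases hstep a b hab with h | h
      · exact ⟨a, b, hab, rfl, h⟩
      · exact ⟨b, a, hab.symm, Sym2.eq_swap, h⟩
  choose xe ye hadj heq hcy using hdata
  -- the fundamental cut side of each tree edge
  set X : ∀ e, e ∈ T.edgeSet → Set V := fun e he => {u | ye e he ∈ (p u).support} with hXdef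
  have hXmem : ∀ e he u, u ∈ X e he ↔ ye e he ∈ (p u).support := fun _ _ _ => Iff.rfl
  have hyX : ∀ e he, ye e he ∈ X e he := fun e he => Walk.end_mem_support _
  have hxX : ∀ e he, xe e he ∉ X e he := by
    intro e he hmem
    have hpath : ((p (xe e he)).concat (hadj e he)).IsPath := (hcy e he) ▸ hp (ye e he)
    have hnd := hpath.support_nodup
    rw [Walk.support_concat, List.nodup_append] at hnd
    exact hnd.2.2 _ hmem _ (List.mem_singleton_self _) rfl
  have hrX : ∀ e he, r ∉ X e he := by
    intro e he hmem
    have hnil : (Walk.nil : T.Walk r r) = p r := huniq r Walk.nil Walk.IsPath.nil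
    rw [hXmem, ← hnil] at hmem
    have hyr : ye e he = r := by simpa using hmem
    have : ye e he ∈ (p (xe e he)).support := by
      rw [hyr]; exact Walk.start_mem_support _
    exact hxX e he this
  -- laminarity of the cut sides
  have hlamX : ∀ e he e' he' u, u ∈ X e he → u ∈ X e' he' →
      X e he ⊆ X e' he' ∨ X e' he' ⊆ X e he := by
    intro e he e' he' u hu hu'
    rcases walk_takeUntil_or (p u) hu hu' with h | h
    · rw [htake _ u hu'] at h
      right
      intro v hv
      exact hsub _ v hv h
    · rw [htake _ u hu] at h
      left
      intro v hv
      exact hsub _ v hv h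
  -- a tree edge crossing the cut of `e` must be `e` itself
  have hcross : ∀ e he a b (hab : T.Adj a b), a ∉ X e he → b ∈ X e he → s(a, b) = e := by
    intro e he a b hab haX hbX
    rcases hstep a b hab with h | h
    · have hyb : ye e he = b := by
        have hmem := (hXmem e he b).mp hbX
        rw [h, Walk.support_concat, List.mem_append] at hmem
        rcases hmem with h1 | h1
        · exact absurd h1 haX
        · simpa using h1
      have hcopy : ((p (ye e he)).copy rfl hyb).IsPath := (Walk.isPath_copy _ rfl hyb).mpr (hp _)
      have heqw : (p (ye e he)).copy rfl hyb = p b := huniq b _ hcopy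
      have hedges : (p (ye e he)).edges = (p b).edges := by rw [← heqw, Walk.edges_copy]
      rw [hcy e he, h, Walk.edges_concat, Walk.edges_concat] at hedges
      have hlast := congrArg List.getLast? hedges
      simp only [List.concat_eq_append] at hlast
      rw [List.getLast?_concat, List.getLast?_concat] at hlast
      have hfin : s(xe e he, ye e he) = s(a, b) := Option.some.inj hlast
      rw [heq e he]
      exact hfin.symm
    · exfalso
      apply haX
      rw [hXmem]
      have hsupp : (p b).support ⊆ (p a).support := by
        rw [h, Walk.support_concat]
        intro x hx
        exact List.mem_append_left _ hx
      exact hsupp ((hXmem e he b).mp hbX)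
  -- if the cuts are nested and `y` of the outer edge lies inside the inner cut, edges coincide
  have hstrict : ∀ e he e' he', X e' he' ⊆ X e he → ye e he ∈ X e' he' → e = e' := by
    intro e he e' he' hss hy
    have ha : xe e he ∉ X e' he' := fun hmem => hxX e he (hss hmem)
    have hfin := hcross e' he' (xe e he) (ye e he) (hadj e he) ha hy
    exact (heq e he).trans hfin
  -- the set of non-tree edges and labels
  set Fs : Set (Sym2 V) := G.edgeSet \ T.edgeSet with hFs
  set label : ∀ e, e ∈ T.edgeSet → Set (Sym2 V) :=
    fun e he => {f | f ∈ Fs ∧ ∃ a b, f = s(a, b) ∧ a ∈ X e he ∧ b ∉ X e he} with hlabeldef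
  have hlabelmem : ∀ e he f, f ∈ label e he ↔
      f ∈ Fs ∧ ∃ a b, f = s(a, b) ∧ a ∈ X e he ∧ b ∉ X e he := fun _ _ _ => Iff.rfl
  -- the cut criterion for disconnection
  have hcut : ∀ (e₁ e₂ : Sym2 V) (B : Set V) (b₀ : V), b₀ ∈ B → r ∉ B →
      (∀ a b, G.Adj a b → a ∈ B → b ∉ B → s(a, b) = e₁ ∨ s(a, b) = e₂) →
      ¬(G.deleteEdges {e₁, e₂}).Connected := by
    intro e₁ e₂ B b₀ hb₀ hr hcrossing hconn
    obtain ⟨w⟩ := hconn b₀ r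
    obtain ⟨d, hd, hdB, hdB'⟩ := w.exists_boundary_dart B hb₀ hr
    have hadjd : (G.deleteEdges {e₁, e₂}).Adj d.fst d.snd := d.adj
    rw [deleteEdges_adj] at hadjd
    rcases hcrossing d.fst d.snd hadjd.1 hdB hdB' with h | h <;>
      exact hadjd.2 (by simp [h])
  -- nested case of the disconnection argument
  have hnested : ∀ e he e' he', label e he = label e' he' → e ≠ e' → X e' he' ⊆ X e he →
      ¬(G.deleteEdges {e, e'}).Connected := by
    intro e he e' he' hlab hne hss
    have hyB : ye e he ∈ X e he \ X e' he' :=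
      ⟨hyX e he, fun hmem => hne (hstrict e he e' he' hss hmem)⟩
    apply hcut e e' (X e he \ X e' he') (ye e he) hyB (fun hmem => hrX e he hmem.1)
    intro a b hGab haB hbB
    by_cases hT' : s(a, b) ∈ T.edgeSet
    · have htab : T.Adj a b := (T.mem_edgeSet).mp hT'
      by_cases hbXe : b ∈ X e he
      · have hbXe' : b ∈ X e' he' := by
          by_contra hh; exact hbB ⟨hbXe, hh⟩
        right
        exact hcross e' he' a b htab (fun hmem => haB.2 hmem) hbXe'
      · left
        rw [Sym2.eq_swap]
        exact hcross e he b a htab.symm hbXe haB.1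
    · exfalso
      have hf : s(a, b) ∈ Fs := ⟨(G.mem_edgeSet).mpr hGab, hT'⟩
      by_cases hbXe : b ∈ X e he
      · have hbXe' : b ∈ X e' he' := by by_contra hh; exact hbB ⟨hbXe, hh⟩
        have hcr' : s(a, b) ∈ label e' he' := ⟨hf, b, a, Sym2.eq_swap, hbXe', haB.2⟩
        rw [← hlab] at hcr'
        obtain ⟨-, c, d, hcd, hcX, hdX⟩ := hcr'
        rcases Sym2.eq_iff.mp hcd with ⟨h1, h2⟩ | ⟨h1, h2⟩
        · exact hdX (by rw [← h2]; exact hbXe)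
        · exact hdX (by rw [← h1]; exact haB.1)
      · have hcr : s(a, b) ∈ label e he := ⟨hf, a, b, rfl, haB.1, hbXe⟩
        rw [hlab] at hcr
        obtain ⟨-, c, d, hcd, hcX, hdX⟩ := hcr
        have hbXe' : b ∉ X e' he' := fun hh => hbXe (hss hh)
        rcases Sym2.eq_iff.mp hcd with ⟨h1, h2⟩ | ⟨h1, h2⟩
        · exact haB.2 (by rw [h1]; exact hcX)
        · exact hbXe' (by rw [h2]; exact hcX)
  -- disjoint case of the disconnection argument
  have hdisjcase : ∀ e he e' he', label e he = label e' he' →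
      (∀ u, u ∈ X e he → u ∈ X e' he' → False) →
      ¬(G.deleteEdges {e, e'}).Connected := by
    intro e he e' he' hlab hdis
    apply hcut e e' (X e he ∪ X e' he') (ye e he) (Or.inl (hyX e he))
      (fun hmem => hmem.elim (hrX e he) (hrX e' he'))
    intro a b hGab haB hbB
    have hbXe : b ∉ X e he := fun hh => hbB (Or.inl hh)
    have hbXe' : b ∉ X e' he' := fun hh => hbB (Or.inr hh)
    by_cases hT' : s(a, b) ∈ T.edgeSet
    · have htab : T.Adj a b := (T.mem_edgeSet).mp hT'
      rcases haB with ha | ha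
      · left; rw [Sym2.eq_swap]; exact hcross e he b a htab.symm hbXe ha
      · right; rw [Sym2.eq_swap]; exact hcross e' he' b a htab.symm hbXe' ha
    · exfalso
      have hf : s(a, b) ∈ Fs := ⟨(G.mem_edgeSet).mpr hGab, hT'⟩
      rcases haB with ha | ha
      · have hcr : s(a, b) ∈ label e he := ⟨hf, a, b, rfl, ha, hbXe⟩
        rw [hlab] at hcr
        obtain ⟨-, c, d, hcd, hcX, hdX⟩ := hcr
        rcases Sym2.eq_iff.mp hcd with ⟨h1, h2⟩ | ⟨h1, h2⟩
        · exact hdis a ha (by rw [h1]; exact hcX)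
        · exact hbXe' (by rw [h2]; exact hcX)
      · have hcr : s(a, b) ∈ label e' he' := ⟨hf, a, b, rfl, ha, hbXe'⟩
        rw [← hlab] at hcr
        obtain ⟨-, c, d, hcd, hcX, hdX⟩ := hcr
        rcases Sym2.eq_iff.mp hcd with ⟨h1, h2⟩ | ⟨h1, h2⟩
        · exact hdis a (by rw [h1]; exact hcX) ha
        · exact hbXe (by rw [h2]; exact hcX)
  -- the full disconnection statement
  have hdiscon : ∀ e he e' he', label e he = label e' he' → e ≠ e' →
      ¬(G.deleteEdges {e, e'}).Connected := by
    intro e he e' he' hlab hne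
    by_cases hint : ∃ u, u ∈ X e he ∧ u ∈ X e' he'
    · obtain ⟨u, hu, hu'⟩ := hint
      rcases hlamX e he e' he' u hu hu' with h | h
      · have := hnested e' he' e he hlab.symm (Ne.symm hne) h
        rwa [Set.pair_comm] at this
      · exact hnested e he e' he' hlab hne h
    · exact hdisjcase e he e' he' hlab (fun u hu hu' => hint ⟨u, hu, hu'⟩)
  -- now the counting setup
  set M : Set V := {v | ∃ f ∈ Fs, v ∈ f} with hM
  set Mfin : Finset V := (Set.toFinite M).toFinset with hMfin
  set Ffin : Finset (Sym2 V) := (Set.toFinite Fs).toFinset with hFfin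
  have hFcard : Ffin.card = k := by
    rw [← hk, Set.ncard_eq_toFinset_card Fs (Set.toFinite Fs)]
  have hMcard : Mfin.card ≤ 2 * k := by
    have hsub2 : Mfin ⊆ Ffin.biUnion (fun f => {f.out.1, f.out.2}) := by
      intro v hv
      rw [hMfin, Set.Finite.mem_toFinset] at hv
      obtain ⟨f, hf, hvf⟩ := hv
      rw [Finset.mem_biUnion]
      refine ⟨f, by rw [hFfin, Set.Finite.mem_toFinset]; exact hf, ?_⟩
      have hout : f = s(f.out.1, f.out.2) := by
        conv_lhs => rw [← f.out_eq]
      rw [hout] at hvf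
      rcases Sym2.mem_iff.mp hvf with h | h <;> simp [h]
    calc Mfin.card ≤ (Ffin.biUnion (fun f => {f.out.1, f.out.2})).card :=
          Finset.card_le_card hsub2
      _ ≤ ∑ f ∈ Ffin, ({f.out.1, f.out.2} : Finset V).card := Finset.card_biUnion_le
      _ ≤ ∑ f ∈ Ffin, 2 := Finset.sum_le_sum (fun f _ => by
          exact (Finset.card_insert_le _ _).trans (by simp))
      _ = 2 * k := by rw [Finset.sum_const, hFcard]; ring
  -- the label of an edge only depends on the trace of its cut on M
  set Afin : ∀ e, e ∈ T.edgeSet → Finset V := fun e he => Mfin.filter (· ∈ X e he) with hAfin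
  set labelOf : Finset V → Set (Sym2 V) :=
    fun A => {f | f ∈ Fs ∧ ∃ a b, f = s(a, b) ∧ a ∈ A ∧ b ∉ A} with hlabelOf
  have hmemM : ∀ (a : V) (f : Sym2 V), f ∈ Fs → a ∈ f → a ∈ Mfin := by
    intro a f hf haf
    rw [hMfin, Set.Finite.mem_toFinset]
    exact ⟨f, hf, haf⟩
  have hlabelfactor : ∀ e he, label e he = labelOf (Afin e he) := by
    intro e he
    ext f
    constructor
    · rintro ⟨hf, a, b, rfl, haX, hbX⟩
      refine ⟨hf, a, b, rfl, ?_, ?_⟩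
      · rw [hAfin, Finset.mem_filter]
        exact ⟨hmemM a _ hf (by simp), haX⟩
      · intro hmem
        rw [hAfin, Finset.mem_filter] at hmem
        exact hbX hmem.2
    · rintro ⟨hf, a, b, rfl, haA, hbA⟩
      rw [hAfin, Finset.mem_filter] at haA
      refine ⟨hf, a, b, rfl, haA.2, ?_⟩
      intro hbX
      apply hbA
      rw [hAfin, Finset.mem_filter]
      exact ⟨hmemM b _ hf (by simp), hbX⟩
  -- the partition
  set Efin : Finset (Sym2 V) := (Set.toFinite T.edgeSet).toFinset with hEfin
  have hmemE : ∀ e, e ∈ Efin ↔ e ∈ T.edgeSet := fun e => Set.Finite.mem_toFinset _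
  set cls : Finset V → Set (Sym2 V) :=
    fun A => {e' | ∃ he' : e' ∈ T.edgeSet, label e' he' = labelOf A} with hcls
  set 𝓐 : Finset (Finset V) :=
    Efin.attach.image (fun e => Afin e.1 ((hmemE e.1).mp e.2)) with h𝓐
  set P : Finset (Set (Sym2 V)) := 𝓐.image cls with hP
  have h𝓐mem : ∀ A ∈ 𝓐, ∃ e he, A = Afin e he := by
    intro A hA
    rw [h𝓐, Finset.mem_image] at hA
    obtain ⟨⟨e, hemem⟩, -, rfl⟩ := hA
    exact ⟨e, (hmemE e).mp hemem, rfl⟩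
  have h𝓐mem' : ∀ e he, Afin e he ∈ 𝓐 := by
    intro e he
    rw [h𝓐, Finset.mem_image]
    exact ⟨⟨e, (hmemE e).mpr he⟩, Finset.mem_attach _ _, rfl⟩
  refine ⟨P, ?_, ?_, ?_, ?_⟩
  · -- cardinality bound
    have hPA : P.card ≤ 𝓐.card := Finset.card_image_le
    have hAsub : ∀ A ∈ 𝓐, A ⊆ Mfin := by
      intro A hA
      obtain ⟨e, he, rfl⟩ := h𝓐mem A hA
      rw [hAfin]
      exact Finset.filter_subset _ _
    have hsplit := Finset.card_filter_add_card_filter_not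
      (s := 𝓐) (p := fun A => A.card ≤ 1)
    have hsmall : (𝓐.filter (fun A => A.card ≤ 1)).card ≤ 1 + Mfin.card := by
      have hss : 𝓐.filter (fun A => A.card ≤ 1) ⊆
          insert ∅ (Mfin.image fun x => ({x} : Finset V)) := by
        intro A hA
        rw [Finset.mem_filter] at hA
        rcases A.eq_empty_or_nonempty with rfl | hne
        · exact Finset.mem_insert_self _ _
        · have : A.card = 1 := le_antisymm hA.2 (Finset.card_pos.mpr hne)
          obtain ⟨a, rfl⟩ := Finset.card_eq_one.mp this
          refine Finset.mem_insert_of_mem (Finset.mem_image.mpr ⟨a, ?_, rfl⟩)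
          exact hAsub _ hA.1 (Finset.mem_singleton_self a)
      calc (𝓐.filter (fun A => A.card ≤ 1)).card
          ≤ (insert ∅ (Mfin.image fun x => ({x} : Finset V))).card := Finset.card_le_card hss
        _ ≤ 1 + (Mfin.image fun x => ({x} : Finset V)).card := by
            rw [add_comm]; exact Finset.card_insert_le _ _
        _ ≤ 1 + Mfin.card := by
            have himg : (Mfin.image fun x => ({x} : Finset V)).card ≤ Mfin.card :=
              Finset.card_image_le
            omega
    have hbig : (𝓐.filter (fun A => ¬A.card ≤ 1)).card ≤ Mfin.card := by
      apply laminar_big_card Mfin.card Mfin le_rfl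
      · intro A hA
        rw [Finset.mem_filter] at hA
        exact hAsub A hA.1
      · intro A hA
        rw [Finset.mem_filter] at hA
        omega
      · intro A hA B hB
        rw [Finset.mem_filter] at hA hB
        obtain ⟨e, he, rfl⟩ := h𝓐mem A hA.1
        obtain ⟨e', he', rfl⟩ := h𝓐mem B hB.1
        by_cases hint : ∃ u, u ∈ X e he ∧ u ∈ X e' he'
        · obtain ⟨u, hu, hu'⟩ := hint
          rcases hlamX e he e' he' u hu hu' with h | h
          · left
            rw [hAfin]
            exact Finset.monotone_filter_right _ (fun v _ hv => h hv)
          · right; left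
            rw [hAfin]
            exact Finset.monotone_filter_right _ (fun v _ hv => h hv)
        · right; right
          rw [Finset.disjoint_left]
          intro v hv hv'
          rw [hAfin, Finset.mem_filter] at hv hv'
          exact hint ⟨v, hv.2, hv'.2⟩
    omega
  · -- each set consists of tree edges
    intro S hS
    rw [hP, Finset.mem_image] at hS
    obtain ⟨A, -, rfl⟩ := hS
    intro e' he'
    exact he'.1
  · -- each tree edge is in exactly one set
    intro e he
    refine ⟨cls (Afin e he), ⟨Finset.mem_image_of_mem cls (h𝓐mem' e he),
      ⟨he, hlabelfactor e he⟩⟩, ?_⟩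
    rintro S' ⟨hS'P, hS'e⟩
    rw [hP, Finset.mem_image] at hS'P
    obtain ⟨A', -, rfl⟩ := hS'P
    obtain ⟨he2, hlab2⟩ := hS'e
    have hAA : labelOf A' = labelOf (Afin e he) := hlab2.symm.trans (hlabelfactor e he)
    ext e₁
    simp only [hcls, Set.mem_setOf_eq, hAA]
  · -- the deletion property
    intro S hS e heS e' he'S hne
    rw [hP, Finset.mem_image] at hS
    obtain ⟨A, -, rfl⟩ := hS
    obtain ⟨he, hlab⟩ := heS
    obtain ⟨he', hlab'⟩ := he'S
    exact hdiscon e he e' he' (hlab.trans hlab'.symm) hne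
end

section
/- Let G be a finite simple graph with an injective weight function w on its edges, and let P be a partition of the vertex set of G. For each part p of P that has at least one edge of G with exactly one endpoint in p, let e_p be the minimum-weight edge of G with exactly one endpoint in p. Then the set of chosen edges {e_p} contains no cycle, i.e., the spanning subgraph of G whose edge set is {e_p : p ∈ P} is acyclic. -/
open SimpleGraph

/-- `Outgoing G p e` says that `e` is an edge of `G` with exactly one endpoint in the
vertex set `p`. -/
def Outgoing {V : Type*} (G : SimpleGraph V) (p : Set V) (e : Sym2 V) : Prop :=
  e ∈ G.edgeSet ∧ ∃ a b : V, e = s(a, b) ∧ a ∈ p ∧ b ∉ p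

/-- Parity of boundary crossings of a walk: a walk has an even number of darts crossing
the boundary of `p` iff its endpoints are on the same side of `p`. -/
lemma crossings_parity {V : Type*} {H : SimpleGraph V} (p : Set V)
    [DecidablePred (· ∈ p)] :
    ∀ {u v : V} (q : H.Walk u v),
      Even (q.darts.filter (fun d => ¬((d.fst ∈ p) ↔ (d.snd ∈ p)))).length ↔
        ((u ∈ p) ↔ (v ∈ p)) := by
  intro u v q
  induction q with
  | nil => simp
  | @cons a b c h q ih =>
    rw [Walk.darts_cons, List.filter_cons]
    by_cases hx : (a ∈ p ↔ b ∈ p)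
    · rw [if_neg (by simpa using hx)]
      rw [ih]
      tauto
    · rw [if_pos (by simpa using hx), List.length_cons, Nat.even_add_one, not_iff_comm, ih]
      tauto

/-- Let `G` be a finite simple graph whose edges carry distinct real weights
(`w` is injective on the edge set), and let `P` be a partition of the vertex set of `G`.  For
each part `p ∈ P` having at least one outgoing edge, let `sel p` be the minimum-weight edge of
`G` with exactly one endpoint in `p`.  Then the spanning subgraph of `G` whose edges are the
chosen edges `sel p` is acyclic. -/
theorem minimum_outgoing_edges_acyclic {V : Type*} [Fintype V]
    (G : SimpleGraph V) (w : Sym2 V → ℝ) (hw : Set.InjOn w G.edgeSet)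
    (P : Set (Set V)) (hP : Setoid.IsPartition P)
    (sel : Set V → Sym2 V)
    (hsel : ∀ p ∈ P, (∃ e, Outgoing G p e) →
      Outgoing G p (sel p) ∧ ∀ e, Outgoing G p e → w (sel p) ≤ w e) :
    (SimpleGraph.fromEdgeSet
      {e : Sym2 V | ∃ p ∈ P, (∃ e', Outgoing G p e') ∧ e = sel p}).IsAcyclic := by
  classical
  set S : Set (Sym2 V) := {e : Sym2 V | ∃ p ∈ P, (∃ e', Outgoing G p e') ∧ e = sel p} with hS
  intro v c hc
  -- all edges of the cycle lie in S, hence in G.edgeSet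
  have hES : ∀ e ∈ c.edges, e ∈ S := by
    intro e he
    have h1 := c.edges_subset_edgeSet he
    rw [edgeSet_fromEdgeSet] at h1
    exact h1.1
  have hSG : ∀ e ∈ S, e ∈ G.edgeSet := by
    rintro e ⟨p, hp, hex, rfl⟩
    exact ((hsel p hp hex).1).1
  -- pick the max-weight edge of the cycle
  have hne : c.edges.toFinset.Nonempty := by
    rw [List.toFinset_nonempty_iff]
    have h3 := hc.three_le_length
    intro h0
    rw [← Walk.length_edges, h0] at h3
    simp at h3
  obtain ⟨e, heF, hmax⟩ := Finset.exists_max_image c.edges.toFinset w hne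
  have hec : e ∈ c.edges := List.mem_toFinset.mp heF
  obtain ⟨p, hp, hex, hesel⟩ := hES e hec
  obtain ⟨⟨heG, a, b, hab, haP, hbP⟩, hmin⟩ := hsel p hp hex
  rw [← hesel] at hab hmin heG
  -- a dart of the cycle with edge e
  have hecd : e ∈ c.darts.map SimpleGraph.Dart.edge := hec
  obtain ⟨d0, hd0mem, hd0e⟩ := List.mem_map.mp hecd
  have hd0cross : ¬((d0.fst ∈ p) ↔ (d0.snd ∈ p)) := by
    have : s(d0.fst, d0.snd) = s(a, b) := by rw [← hab, ← hd0e]; rfl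
    rw [Sym2.eq_iff] at this
    rcases this with ⟨h1, h2⟩ | ⟨h1, h2⟩ <;> subst h1 <;> subst h2 <;> tauto
  -- the filtered list of crossing darts
  set L := c.darts.filter (fun d => ¬((d.fst ∈ p) ↔ (d.snd ∈ p))) with hL
  have hLmem : d0 ∈ L := List.mem_filter.mpr ⟨hd0mem, by simpa using hd0cross⟩
  have hLeven : Even L.length := (crossings_parity p c).mpr Iff.rfl
  have hdartsnd : c.darts.Nodup := hc.edges_nodup.of_map _
  have hLnd : L.Nodup := hdartsnd.filter _
  -- a second crossing dart
  have hL2 : 1 ≤ (L.erase d0).length := by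
    rw [List.length_erase_of_mem hLmem]
    rcases hLeven with ⟨k, hk⟩
    have : 1 ≤ L.length := List.length_pos_of_mem hLmem
    omega
  obtain ⟨d', hd'⟩ := List.exists_mem_of_length_pos hL2
  obtain ⟨hne', hd'L⟩ := (List.Nodup.mem_erase_iff hLnd).mp hd'
  have hd'darts : d' ∈ c.darts := List.mem_of_mem_filter hd'L
  have hd'cross : ¬((d'.fst ∈ p) ↔ (d'.snd ∈ p)) := by
    have := (List.mem_filter.mp hd'L).2
    simpa using this
  set e' := d'.edge with he'
  have he'c : e' ∈ c.edges := List.mem_map_of_mem (f := SimpleGraph.Dart.edge) hd'darts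
  have he'S : e' ∈ S := hES e' he'c
  have he'G : e' ∈ G.edgeSet := hSG e' he'S
  have he'ne : e' ≠ e := by
    intro h
    apply hne'
    exact List.inj_on_of_nodup_map hc.edges_nodup hd'darts hd0mem (by rw [hd0e, ← h])
  have hout : Outgoing G p e' := by
    refine ⟨he'G, ?_⟩
    by_cases h1 : d'.fst ∈ p
    · exact ⟨d'.fst, d'.snd, rfl, h1, fun h2 => hd'cross ⟨fun _ => h2, fun _ => h1⟩⟩
    · refine ⟨d'.snd, d'.fst, Sym2.eq_swap.symm ▸ rfl, ?_, h1⟩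
      by_contra h2
      exact hd'cross ⟨fun h => absurd h h1, fun h => absurd h h2⟩
  have h1 : w e ≤ w e' := hmin e' hout
  have h2 : w e' ≤ w e := hmax e' (List.mem_toFinset.mpr he'c)
  exact he'ne (hw he'G heG (le_antisymm h2 h1))
end
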